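/- arXiv:2404.17863 — 4 statements merged into one kernel-verified Lean document; each statement's English description precedes it below -/
import Mathlib

section
/- Suppose θ = (1/π)·arg(q) is irrational (in particular q is not real). Let 𝒪 be the (not necessarily closed) star-subalgebra of B(H) generated by A, B, D and the identity. Then the center of 𝒪 is trivial: every element of 𝒪 commuting with all elements of 𝒪 is a scalar multiple of the identity. -/
open scoped InnerProductSpace
noncomputable section

/-- The Hilbert space `H = ℓ²(ℕ × ℤ × ℤ)`. -/
abbrev UqH : Type := lp (fun _ : ℕ × ℤ × ℤ => ℂ) 2

/-- The standard orthonormal basis vectors `e_{i,j,k}` of `H`. -/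
def e (i : ℕ) (j k : ℤ) : UqH := lp.single 2 (i, j, k) 1

namespace UqAux

abbrev Idx : Type := ℕ × ℤ × ℤ

def ee (p : Idx) : UqH := lp.single 2 p 1

lemma ee_def (i : ℕ) (j k : ℤ) : e i j k = ee (i, j, k) := rfl

lemma apply_eq_inner (x : UqH) (p : Idx) : x p = ⟪ee p, x⟫_ℂ := by
  rw [ee, lp.inner_single_left, RCLike.inner_apply]
  simp

/-- matrix entry of an operator -/
def ent (T : UqH →L[ℂ] UqH) (p' p : Idx) : ℂ := ⟪ee p', T (ee p)⟫_ℂ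

lemma ent_star (T : UqH →L[ℂ] UqH) (p' p : Idx) :
    ent (star T) p' p = (starRingEnd ℂ) (ent T p p') := by
  rw [ent, ent, ContinuousLinearMap.star_eq_adjoint,
    ContinuousLinearMap.adjoint_inner_right, ← inner_conj_symm]

lemma ent_mul (S T : UqH →L[ℂ] UqH) (p' p : Idx) :
    ent (S * T) p' p = ∑' p'' : Idx, ent S p' p'' * ent T p'' p := by
  have h1 : ent (S * T) p' p
      = ⟪(ContinuousLinearMap.adjoint S) (ee p'), T (ee p)⟫_ℂ := by
    rw [ent, ContinuousLinearMap.mul_apply, ContinuousLinearMap.adjoint_inner_left]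
  rw [h1, lp.inner_eq_tsum]
  refine tsum_congr fun p'' => ?_
  rw [RCLike.inner_apply, mul_comm]
  congr 1
  · rw [apply_eq_inner, ContinuousLinearMap.adjoint_inner_right, inner_conj_symm]; rfl
  · exact apply_eq_inner (T (ee p)) p''

/-- the phase `e^{-2πiθn}` -/
def ph (θ : ℝ) (n : ℤ) : ℂ :=
  Complex.exp (-(2 * (Real.pi : ℂ) * (θ : ℂ) * (n : ℂ)) * Complex.I)

lemma ph_add (θ : ℝ) (a b : ℤ) : ph θ (a + b) = ph θ a * ph θ b := by
  rw [ph, ph, ph, ← Complex.exp_add]; congr 1; push_cast; ring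

lemma ph_zero (θ : ℝ) : ph θ 0 = 1 := by simp [ph]

lemma ph_ne_zero (θ : ℝ) (n : ℤ) : ph θ n ≠ 0 := Complex.exp_ne_zero _

lemma conj_ph (θ : ℝ) (n : ℤ) : (starRingEnd ℂ) (ph θ n) = ph θ (-n) := by
  rw [ph, ph, ← Complex.exp_conj]
  congr 1
  simp only [map_mul, map_neg, Complex.conj_I, Complex.conj_ofReal, map_ofNat, map_intCast]
  push_cast
  ring

lemma ph_eq_one {θ : ℝ} (hirr : Irrational θ) {n : ℤ} (h : ph θ n = 1) : n = 0 := by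
  by_contra hn
  rw [ph, Complex.exp_eq_one_iff] at h
  obtain ⟨z, hz⟩ := h
  have h1 : ((-(2 * Real.pi * θ * (n : ℝ)) : ℝ) : ℂ) * Complex.I
      = ((((z : ℝ)) * (2 * Real.pi) : ℝ) : ℂ) * Complex.I := by
    push_cast
    convert hz using 1 <;> ring
  have h2' := mul_right_cancel₀ Complex.I_ne_zero h1
  have h2 : (-(2 * Real.pi * θ * (n : ℝ)) : ℝ) = (z : ℝ) * (2 * Real.pi) := by
    exact_mod_cast h2'
  have h3 : (2 * Real.pi) * (-(θ * (n : ℝ))) = (2 * Real.pi) * (z : ℝ) := by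
    linear_combination h2
  have h4 : θ * (n : ℝ) = -(z : ℝ) := by
    have := mul_left_cancel₀ (by positivity : (2 * Real.pi) ≠ 0) h3
    linarith
  refine hirr ⟨(-z : ℚ) / (n : ℚ), ?_⟩
  have hn' : (n : ℝ) ≠ 0 := Int.cast_ne_zero.mpr hn
  push_cast
  rw [div_eq_iff hn']
  linarith

lemma inner_ee_ee (p' p : Idx) : ⟪ee p', ee p⟫_ℂ = if p' = p then 1 else 0 := by
  rw [← apply_eq_inner]
  by_cases h : p' = p
  · subst h; simp [ee, lp.single_apply_self]
  · simp only [h, if_false]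
    exact lp.single_apply_ne (E := fun _ : ℕ × ℤ × ℤ => ℂ) 2 p 1 h

lemma ent_of_eq {T : UqH →L[ℂ] UqH} {p : Idx} {c : ℂ} {p₀ : Idx}
    (h : T (ee p) = c • ee p₀) (p' : Idx) :
    ent T p' p = if p' = p₀ then c else 0 := by
  rw [ent, h, inner_smul_right, inner_ee_ee]
  split <;> simp

/-- The key invariant, satisfied by every element of the polynomial algebra. -/
def P (θ : ℝ) (T : UqH →L[ℂ] UqH) : Prop :=
  ∀ (i' i : ℕ) (j' k' j k m n : ℤ),
    ent T (i', j' + m, k' + n) (i, j + m, k + n)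
      = ph θ (m * (k' - k)) * ent T (i', j', k') (i, j, k)

lemma P_elem (θ : ℝ) {T : UqH →L[ℂ] UqH} (f : ℕ → ℕ) (b c : ℤ) (g : ℕ → ℂ)
    (hT : ∀ (i : ℕ) (j k : ℤ),
      T (ee (i, j, k)) = (g i * ph θ (c * j)) • ee (f i, j + b, k + c)) :
    P θ T := by
  intro i' i j' k' j k m n
  rw [ent_of_eq (hT i (j + m) (k + n)), ent_of_eq (hT i j k)]
  by_cases h : (i', j', k') = ((f i : ℕ), j + b, k + c)
  · have h' : i' = f i ∧ j' = j + b ∧ k' = k + c := by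
      simpa [Prod.ext_iff] using h
    obtain ⟨r1, r2, r3⟩ := h'
    subst r1; subst r2; subst r3
    rw [if_pos h, if_pos (by simp [Prod.ext_iff]; constructor <;> ring)]
    rw [show c * (j + m) = m * ((k + c) - k) + c * j by ring, ph_add]
    ring
  · rw [if_neg h, if_neg ?_, mul_zero]
    intro hc
    apply h
    have h' : i' = f i ∧ j' + m = j + m + b ∧ k' + n = k + n + c := by
      simpa [Prod.ext_iff] using hc
    simp only [Prod.ext_iff]
    refine ⟨h'.1, ?_, ?_⟩ <;> [skip; skip] <;> omega

lemma P_add (θ : ℝ) {S T : UqH →L[ℂ] UqH} (hS : P θ S) (hT : P θ T) : P θ (S + T) := by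
  intro i' i j' k' j k m n
  have hadd : ∀ p' p : Idx, ent (S + T) p' p = ent S p' p + ent T p' p := by
    intro p' p
    rw [ent, ent, ent, ContinuousLinearMap.add_apply, inner_add_right]
  rw [hadd, hadd, hS i' i j' k' j k m n, hT i' i j' k' j k m n]
  ring

lemma P_star (θ : ℝ) {T : UqH →L[ℂ] UqH} (hT : P θ T) : P θ (star T) := by
  intro i' i j' k' j k m n
  rw [ent_star, ent_star, hT i i' j k j' k' m n, map_mul, conj_ph]
  congr 2
  ring

lemma P_mul (θ : ℝ) {S T : UqH →L[ℂ] UqH} (hS : P θ S) (hT : P θ T) : P θ (S * T) := by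
  intro i' i j' k' j k m n
  rw [ent_mul, ent_mul, ← tsum_mul_left]
  have hσ := Equiv.tsum_eq
    ((Equiv.refl ℕ).prodCongr ((Equiv.addRight m).prodCongr (Equiv.addRight n)))
    (fun p'' => ent S (i', j' + m, k' + n) p'' * ent T p'' (i, j + m, k + n))
  rw [← hσ]
  refine tsum_congr ?_
  rintro ⟨a, b, c⟩
  simp only [Equiv.prodCongr_apply, Equiv.coe_refl, Prod.map, id, Equiv.coe_addRight]
  rw [hS i' a j' k' b c m n, hT a i b c j k m n,
    show m * (k' - k) = m * (k' - c) + m * (c - k) by ring, ph_add]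
  ring

lemma ent_def (T : UqH →L[ℂ] UqH) (p' p : Idx) : ⟪ee p', T (ee p)⟫_ℂ = ent T p' p := rfl

end UqAux

open UqAux in
/-- if `θ = arg(q)/π` is irrational, then the center of the (not necessarily
closed) star-subalgebra `𝒪 = 𝒪(U_q(2))` of `B(H)` generated by `A`, `B`, `D` and the
identity is trivial: every element of `𝒪` commuting with all of `𝒪` is a scalar. -/
theorem polynomial_algebra_center_trivial_of_irrational
    (q : ℂ) (hq0 : 0 < ‖q‖) (hq1 : ‖q‖ < 1)
    (θ : ℝ) (hθ : θ = Complex.arg q / Real.pi) (hirr : Irrational θ)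
    (A B D : UqH →L[ℂ] UqH)
    (hA : ∀ (i : ℕ) (j k : ℤ),
      A (e i j k) = ((Real.sqrt (1 - ‖q‖ ^ (2 * (i + 1))) : ℝ) : ℂ) • e (i + 1) j k)
    (hB : ∀ (i : ℕ) (j k : ℤ), B (e i j k) = (q ^ i) • e i (j + 1) k)
    (hD : ∀ (i : ℕ) (j k : ℤ),
      D (e i j k) = Complex.exp (-(2 * (Real.pi : ℂ) * (θ : ℂ) * (j : ℂ)) * Complex.I) • e i j (k + 1))
    (hAs : ∀ (i : ℕ) (j k : ℤ),
      (star A) (e i j k) = ((Real.sqrt (1 - ‖q‖ ^ (2 * i)) : ℝ) : ℂ) • e (i - 1) j k)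
    (hBs : ∀ (i : ℕ) (j k : ℤ), (star B) (e i j k) = ((starRingEnd ℂ) q ^ i) • e i (j - 1) k)
    (hDs : ∀ (i : ℕ) (j k : ℤ),
      (star D) (e i j k) = Complex.exp ((2 * (Real.pi : ℂ) * (θ : ℂ) * (j : ℂ)) * Complex.I) • e i j (k - 1))
    (𝒪 : StarSubalgebra ℂ (UqH →L[ℂ] UqH))
    (h𝒪 : 𝒪 = StarAlgebra.adjoin ℂ ({A, B, D} : Set (UqH →L[ℂ] UqH))) :
    ∀ T ∈ 𝒪, (∀ S ∈ 𝒪, T * S = S * T) → ∃ c : ℂ, T = c • (1 : UqH →L[ℂ] UqH) := by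
  intro T hT hcomm
  classical
  -- memberships of generators
  have hAmem : A ∈ 𝒪 := by
    rw [h𝒪]; exact StarAlgebra.subset_adjoin ℂ _ (Set.mem_insert _ _)
  have hBmem : B ∈ 𝒪 := by
    rw [h𝒪]
    exact StarAlgebra.subset_adjoin ℂ _ (Set.mem_insert_of_mem _ (Set.mem_insert _ _))
  have hDmem : D ∈ 𝒪 := by
    rw [h𝒪]
    exact StarAlgebra.subset_adjoin ℂ _
      (Set.mem_insert_of_mem _ (Set.mem_insert_of_mem _ rfl))
  -- the invariant P holds on all of 𝒪
  have hPT : P θ T := by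
    have hT' : T ∈ StarAlgebra.adjoin ℂ ({A, B, D} : Set (UqH →L[ℂ] UqH)) := by
      rw [← h𝒪]; exact hT
    refine StarAlgebra.adjoin_induction ?_ ?_
      (fun x y _ _ hx hy => P_add θ hx hy) (fun x y _ _ hx hy => P_mul θ hx hy)
      (fun x _ hx => P_star θ hx) hT'
    · intro x hx
      simp only [Set.mem_insert_iff, Set.mem_singleton_iff] at hx
      rcases hx with rfl | rfl | rfl
      · exact P_elem θ (fun i => i + 1) 0 0
          (fun i => ((Real.sqrt (1 - ‖q‖ ^ (2 * (i + 1))) : ℝ) : ℂ))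
          (fun i j k => by simpa [ph_zero, ee_def] using hA i j k)
      · exact P_elem θ id 1 0 (fun i => q ^ i)
          (fun i j k => by simpa [ph_zero, id, ee_def] using hB i j k)
      · exact P_elem θ id 0 1 (fun _ => 1)
          (fun i j k => by simpa [ph, id, ee_def] using hD i j k)
    · intro r
      exact P_elem θ id 0 0 (fun _ => r)
        (fun i j k => by
          simp [ph_zero, id, Algebra.algebraMap_eq_smul_one])
  -- matrix-entry commutation principle
  have key : ∀ (S : UqH →L[ℂ] UqH), T * S = S * T →
      ∀ (p p' p₂ p₂' : Idx) (c c' : ℂ),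
      S (ee p) = c • ee p₂ → (star S) (ee p') = c' • ee p₂' →
      c * ent T p' p₂ = (starRingEnd ℂ) c' * ent T p₂' p := by
    intro S hTS p p' p₂ p₂' c c' hS hSs
    have l1 : ent (T * S) p' p = c * ent T p' p₂ := by
      rw [ent, ContinuousLinearMap.mul_apply, hS, map_smul, inner_smul_right, ent_def]
    have l2 : ent (S * T) p' p = (starRingEnd ℂ) c' * ent T p₂' p := by
      rw [ent, ContinuousLinearMap.mul_apply, ← ContinuousLinearMap.adjoint_inner_left,
        ← ContinuousLinearMap.star_eq_adjoint, hSs, inner_smul_left, ent_def]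
    rw [← l1, hTS, l2]
  -- commutation relations for T
  have R_B : ∀ (i' i : ℕ) (j' k' j k : ℤ),
      q ^ i * ent T (i', j', k') (i, j + 1, k)
        = q ^ i' * ent T (i', j' - 1, k') (i, j, k) := by
    intro i' i j' k' j k
    have h := key B (hcomm B hBmem) (i, j, k) (i', j', k') (i, j + 1, k) (i', j' - 1, k')
      (q ^ i) ((starRingEnd ℂ) q ^ i') (hB i j k) (hBs i' j' k')
    simpa using h
  have R_Bs : ∀ (i' i : ℕ) (j' k' j k : ℤ),
      (starRingEnd ℂ) q ^ i * ent T (i', j', k') (i, j - 1, k)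
        = (starRingEnd ℂ) q ^ i' * ent T (i', j' + 1, k') (i, j, k) := by
    intro i' i j' k' j k
    have h := key (star B) (hcomm (star B) (star_mem hBmem)) (i, j, k) (i', j', k')
      (i, j - 1, k) (i', j' + 1, k')
      ((starRingEnd ℂ) q ^ i) (q ^ i') (hBs i j k) (by rw [star_star]; exact hB i' j' k')
    simpa using h
  have hph : ∀ j' : ℤ,
      Complex.exp ((2 * (Real.pi : ℂ) * (θ : ℂ) * (j' : ℂ)) * Complex.I) = ph θ (-j') := by
    intro j'; rw [ph]; congr 1; push_cast; ring
  have R_D : ∀ (i' i : ℕ) (j' k' j k : ℤ),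
      ph θ j * ent T (i', j', k') (i, j, k + 1)
        = ph θ j' * ent T (i', j', k' - 1) (i, j, k) := by
    intro i' i j' k' j k
    have h := key D (hcomm D hDmem) (i, j, k) (i', j', k') (i, j, k + 1) (i', j', k' - 1)
      (ph θ j) (ph θ (-j')) (hD i j k) (by rw [← hph]; exact hDs i' j' k')
    rwa [conj_ph, neg_neg] at h
  have R_A : ∀ (i' i : ℕ) (j' k' j k : ℤ),
      ((Real.sqrt (1 - ‖q‖ ^ (2 * (i + 1))) : ℝ) : ℂ) * ent T (i', j', k') (i + 1, j, k)
        = ((Real.sqrt (1 - ‖q‖ ^ (2 * i')) : ℝ) : ℂ)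
            * ent T (i' - 1, j', k') (i, j, k) := by
    intro i' i j' k' j k
    have h := key A (hcomm A hAmem) (i, j, k) (i', j', k') (i + 1, j, k) (i' - 1, j', k')
      _ _ (hA i j k) (hAs i' j' k')
    rwa [Complex.conj_ofReal] at h
  -- nonvanishing of the sqrt coefficients
  have hroot : ∀ i : ℕ,
      ((Real.sqrt (1 - ‖q‖ ^ (2 * (i + 1))) : ℝ) : ℂ) ≠ 0 := by
    intro i
    have h1 : ‖q‖ ^ (2 * (i + 1)) < 1 :=
      pow_lt_one₀ (norm_nonneg q) hq1 (by omega)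
    simp only [ne_eq, Complex.ofReal_eq_zero]
    exact Real.sqrt_ne_zero'.mpr (by linarith)
  -- step (a): entries off-diagonal in the first index vanish
  have stepa : ∀ (i' i : ℕ) (j' k' j k : ℤ), i' ≠ i → ent T (i', j', k') (i, j, k) = 0 := by
    intro i' i j' k' j k hne
    have h1 : q ^ i * ent T (i', j' + 1, k') (i, j + 1, k)
        = q ^ i' * ent T (i', j', k') (i, j, k) := by
      have := R_B i' i (j' + 1) k' j k
      rwa [Int.add_sub_cancel] at this
    have h2 : (starRingEnd ℂ) q ^ i * ent T (i', j', k') (i, j, k)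
        = (starRingEnd ℂ) q ^ i' * ent T (i', j' + 1, k') (i, j + 1, k) := by
      have := R_Bs i' i j' k' (j + 1) k
      rwa [Int.add_sub_cancel] at this
    have h3 : (q * (starRingEnd ℂ) q) ^ i * ent T (i', j', k') (i, j, k)
        = (q * (starRingEnd ℂ) q) ^ i' * ent T (i', j', k') (i, j, k) := by
      calc (q * (starRingEnd ℂ) q) ^ i * ent T (i', j', k') (i, j, k)
          = q ^ i * ((starRingEnd ℂ) q ^ i * ent T (i', j', k') (i, j, k)) := by
            rw [mul_pow]; ring
        _ = q ^ i * ((starRingEnd ℂ) q ^ i' * ent T (i', j' + 1, k') (i, j + 1, k)) := by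
            rw [h2]
        _ = (starRingEnd ℂ) q ^ i' * (q ^ i * ent T (i', j' + 1, k') (i, j + 1, k)) := by ring
        _ = (starRingEnd ℂ) q ^ i' * (q ^ i' * ent T (i', j', k') (i, j, k)) := by rw [h1]
        _ = (q * (starRingEnd ℂ) q) ^ i' * ent T (i', j', k') (i, j, k) := by
            rw [mul_pow]; ring
    rw [Complex.mul_conj] at h3
    have h0 : 0 < Complex.normSq q := by
      rw [Complex.normSq_pos]
      intro hq
      rw [hq] at hq0; simp at hq0
    have hlt1 : Complex.normSq q < 1 := by
      rw [← Complex.sq_norm]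
      nlinarith
    have h4 : (Complex.normSq q ^ i : ℝ) ≠ (Complex.normSq q ^ i' : ℝ) := by
      rcases lt_or_gt_of_ne hne with hlt | hlt
      · exact ((pow_lt_pow_iff_right_of_lt_one₀ h0 hlt1).mpr hlt).ne
      · exact ((pow_lt_pow_iff_right_of_lt_one₀ h0 hlt1).mpr hlt).ne'
    have h5 : ((Complex.normSq q : ℂ) ^ i - (Complex.normSq q : ℂ) ^ i') ≠ 0 := by
      rw [sub_ne_zero]
      intro hh
      exact h4 (by exact_mod_cast hh)
    have h6 : ((Complex.normSq q : ℂ) ^ i - (Complex.normSq q : ℂ) ^ i')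
        * ent T (i', j', k') (i, j, k) = 0 := by
      linear_combination h3
    rcases mul_eq_zero.mp h6 with h | h
    · exact absurd h h5
    · exact h
  -- step (c): diagonal entries do not depend on the first index
  have stepc : ∀ (i : ℕ) (j' k' j k : ℤ),
      ent T (i + 1, j', k') (i + 1, j, k) = ent T (i, j', k') (i, j, k) := by
    intro i j' k' j k
    have h := R_A (i + 1) i j' k' j k
    simp only [Nat.add_sub_cancel] at h
    exact mul_left_cancel₀ (hroot i) h
  have stepc' : ∀ (i : ℕ) (j' k' j k : ℤ),
      ent T (i, j', k') (i, j, k) = ent T (0, j', k') (0, j, k) := by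
    intro i
    induction i with
    | zero => intro j' k' j k; rfl
    | succ n ih => intro j' k' j k; rw [stepc n j' k' j k]; exact ih j' k' j k
  -- step (e): the only nonzero entry of T e₀₀₀ is at (0,0,0)
  have hw1 : ∀ (j k : ℤ), j ≠ 0 → ent T (0, j, k) (0, 0, 0) = 0 := by
    intro j k hj
    have h1 := R_D 0 0 j (k + 1) 0 0
    rw [ph_zero, one_mul, Int.add_sub_cancel, zero_add] at h1
    have h2 := hPT 0 0 j k 0 0 0 1
    simp only [add_zero, zero_add, zero_mul, sub_zero, ph_zero, one_mul] at h2
    have h3 : ent T (0, j, k) (0, 0, 0) = ph θ j * ent T (0, j, k) (0, 0, 0) :=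
      h2.symm.trans h1
    have hne : ph θ j ≠ 1 := fun hh => hj (ph_eq_one hirr hh)
    have h4 : (1 - ph θ j) * ent T (0, j, k) (0, 0, 0) = 0 := by linear_combination h3
    rcases mul_eq_zero.mp h4 with h | h
    · exact absurd (by linear_combination -h) hne
    · exact h
  have hw2 : ∀ (k : ℤ), k ≠ 0 → ent T (0, 0, k) (0, 0, 0) = 0 := by
    intro k hk
    have h1 := hPT 0 0 0 k 0 0 1 0
    simp only [add_zero, zero_add, sub_zero, one_mul] at h1
    have h2 := R_B 0 0 1 k 0 0
    simp only [pow_zero, one_mul, zero_add, sub_self] at h2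
    have h3 : ent T (0, 0, k) (0, 0, 0) = ph θ k * ent T (0, 0, k) (0, 0, 0) :=
      h2.symm.trans h1
    have hne : ph θ k ≠ 1 := fun hh => hk (ph_eq_one hirr hh)
    have h4 : (1 - ph θ k) * ent T (0, 0, k) (0, 0, 0) = 0 := by linear_combination h3
    rcases mul_eq_zero.mp h4 with h | h
    · exact absurd (by linear_combination -h) hne
    · exact h
  -- step (f): all entries of T
  have hfull : ∀ p' p : Idx,
      ent T p' p = if p' = p then ent T (0, 0, 0) (0, 0, 0) else 0 := by
    rintro ⟨i', j', k'⟩ ⟨i, m, n⟩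
    by_cases hi : i' = i
    · subst hi
      have h1 := hPT i' i' (j' - m) (k' - n) 0 0 m n
      rw [Int.sub_add_cancel, Int.sub_add_cancel, zero_add, zero_add, sub_zero] at h1
      rw [h1, stepc' i' (j' - m) (k' - n) 0 0]
      by_cases hj : j' = m
      · subst hj
        by_cases hk : k' = n
        · subst hk
          simp [ph_zero]
        · rw [sub_self, hw2 (k' - n) (sub_ne_zero_of_ne hk), mul_zero,
            if_neg (by simp [Prod.ext_iff]; intro h; exact absurd h hk)]
      · rw [hw1 (j' - m) (k' - n) (sub_ne_zero_of_ne hj), mul_zero,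
          if_neg (by simp [Prod.ext_iff]; intro h; exact absurd h hj)]
    · rw [stepa i' i j' k' m n hi,
        if_neg (by simp [Prod.ext_iff]; intro h; exact absurd h hi)]
  -- step (g): T on basis vectors
  have hTp : ∀ p : Idx, T (ee p) = ent T (0, 0, 0) (0, 0, 0) • ee p := by
    intro p
    apply lp.ext
    funext p''
    rw [apply_eq_inner (T (ee p)) p'', apply_eq_inner (ent T (0, 0, 0) (0, 0, 0) • ee p) p'',
      inner_smul_right, inner_ee_ee, ent_def, hfull p'' p]
    split_ifs <;> simp
  -- step (h): conclude
  refine ⟨ent T (0, 0, 0) (0, 0, 0), ?_⟩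
  refine ContinuousLinearMap.ext fun x => ?_
  have hs := lp.hasSum_single (E := fun _ : ℕ × ℤ × ℤ => ℂ) (p := 2) ENNReal.ofNat_ne_top x
  have h2 : HasSum (fun p'' : ℕ × ℤ × ℤ => T (lp.single 2 p'' (x p''))) (T x) := T.hasSum hs
  have h3 : (fun p'' : ℕ × ℤ × ℤ => T (lp.single 2 p'' (x p'')))
      = fun p'' => ent T (0, 0, 0) (0, 0, 0) • lp.single 2 p'' (x p'') := by
    funext p''
    have hsingle : lp.single 2 p'' (x p'') = (x p'') • ee p'' := by
      rw [ee, ← lp.single_smul]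
      congr 1
      simp [smul_eq_mul]
    rw [hsingle, map_smul, hTp p'', smul_comm]
  rw [h3] at h2
  have h4 := hs.const_smul (ent T (0, 0, 0) (0, 0, 0))
  have h5 := h2.unique h4
  rw [ContinuousLinearMap.smul_apply, ContinuousLinearMap.one_apply]
  exact h5
end
end

section
/- The conditional expectation E_φ admits no finite quasi-basis on 𝒜: there do not exist n ∈ ℕ and elements u₁, …, uₙ, v₁, …, vₙ ∈ 𝒜 such that x = Σᵢ uᵢ·E_φ(vᵢ·x) and x = Σᵢ E_φ(x·uᵢ)·vᵢ for all x ∈ 𝒜. Consequently, E_φ is not of index-finite type, i.e., it has infinite Watatani index. -/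
open scoped InnerProductSpace
open MeasureTheory
open scoped ENNReal Pointwise
noncomputable section

instance : MeasurableSpace Circle := borel Circle
instance : BorelSpace Circle := ⟨rfl⟩

abbrev Idx := ℕ × ℤ × ℤ
def bas (t : Idx) : UqH := lp.single 2 t 1

lemma e_eq_bas (t : Idx) : e t.1 t.2.1 t.2.2 = bas t := rfl

lemma coord_eq_inner (f : UqH) (t : Idx) : f t = ⟪bas t, f⟫_ℂ := by
  rw [bas, lp.inner_single_left]; simp [RCLike.inner_apply]

lemma bas_apply (t s : Idx) : (bas t : UqH) s = if s = t then 1 else 0 := by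
  rw [bas, lp.single_apply]
  split_ifs with h
  · subst h; simp
  · simp [Pi.single_apply, h]

lemma norm_bas (t : Idx) : ‖(bas t : UqH)‖ = 1 := by
  have : ‖(lp.single 2 t ((fun _ : Idx => (1:ℂ)) t) : UqH)‖ = ‖(1:ℂ)‖ :=
    lp.norm_single (E := fun _ : Idx => ℂ) (p := 2) (by norm_num) t (1:ℂ)
  simpa [bas] using this

lemma expand (f : UqH) : HasSum (fun t : Idx => f t • bas t) f := by
  have h := lp.hasSum_single ENNReal.ofNat_ne_top f
  convert h using 2 with t
  rw [bas, ← lp.single_smul]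
  norm_num

lemma op_coord (T : UqH →L[ℂ] UqH) (f : UqH) (s : Idx) :
    HasSum (fun t : Idx => f t * (T (bas t)) s) ((T f) s) := by
  have h1 : HasSum (fun t : Idx => T (f t • bas t)) (T f) := T.hasSum (expand f)
  have h2 := ((innerSL ℂ (bas s)).hasSum h1)
  have h3 : ∀ t : Idx, innerSL ℂ (bas s) (T (f t • bas t)) = f t * (T (bas t)) s := by
    intro t
    rw [T.map_smul, innerSL_apply_apply, coord_eq_inner ((T (bas t))), inner_smul_right]
  rw [funext h3] at h2
  simp only [innerSL_apply_apply] at h2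
  rwa [← coord_eq_inner] at h2

lemma Circle.coe_pow' (z : Circle) (n : ℕ) : ((z^n : Circle) : ℂ) = (z:ℂ)^n :=
  map_pow Circle.coeHom z n

lemma Circle.coe_zpow' (z : Circle) (k : ℤ) : ((z^k : Circle) : ℂ) = (z:ℂ)^k := by
  cases k with
  | ofNat n => simp [zpow_natCast, Circle.coe_pow']
  | negSucc n => simp [zpow_negSucc, Circle.coe_pow']

lemma circle_cont_zpow (k : ℤ) : Continuous fun z : Circle => ((z:ℂ)^k) := by
  have h : Continuous fun z : Circle => ((z^k : Circle) : ℂ) :=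
    continuous_subtype_val.comp (continuous_zpow k)
  simpa only [Circle.coe_zpow'] using h

lemma circint (μ : Measure Circle) (hμ : μ.IsHaarMeasure) (hμ1 : IsProbabilityMeasure μ)
    (k : ℤ) (hk : k ≠ 0) : ∫ z : Circle, (z:ℂ)^k ∂μ = 0 := by
  haveI := hμ.toIsMulLeftInvariant
  set w : Circle := Circle.exp (Real.pi / k) with hw
  have h1 : ∫ z : Circle, ((w * z : Circle):ℂ)^k ∂μ = ∫ z : Circle, (z:ℂ)^k ∂μ :=
    integral_mul_left_eq_self (fun z : Circle => ((z:ℂ))^k) w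
  have hkc : (k : ℂ) ≠ 0 := Int.cast_ne_zero.mpr hk
  have h2 : ((w:ℂ))^k = -1 := by
    rw [hw, Circle.coe_exp, ← Complex.exp_int_mul]
    have : (k : ℂ) * (↑(Real.pi / k) * Complex.I) = Real.pi * Complex.I := by
      push_cast; field_simp
    rw [this, Complex.exp_pi_mul_I]
  have h3 : (fun z : Circle => ((w * z : Circle):ℂ)^k) = fun z : Circle => (w:ℂ)^k * (z:ℂ)^k := by
    funext z; rw [Circle.coe_mul, mul_zpow]
  rw [h3, integral_const_mul, h2] at h1
  linear_combination (-(1:ℂ)/2) * h1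

section W
variable (W : Circle → (UqH →L[ℂ] UqH))
  (hW : ∀ (z : Circle) (i : ℕ) (j k : ℤ), W z (e i j k) = ((z : ℂ) ^ k) • e i j k)

include hW

lemma W_bas (z : Circle) (t : Idx) : W z (bas t) = ((z:ℂ) ^ t.2.2) • bas t := hW z t.1 t.2.1 t.2.2

lemma W_coord (z : Circle) (f : UqH) (t : Idx) : (W z f) t = (z:ℂ) ^ t.2.2 * f t := by
  have h := op_coord (W z) f t
  have h2 : ∀ s : Idx, f s * ((W z) (bas s)) t = if s = t then (z:ℂ) ^ t.2.2 * f t else 0 := by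
    intro s
    rw [W_bas W hW, lp.coeFn_smul, Pi.smul_apply, bas_apply, smul_eq_mul]
    by_cases hst : s = t
    · subst hst; simp [mul_comm]
    · rw [if_neg (fun hh => hst hh.symm), if_neg hst, mul_zero, mul_zero]
  rw [funext h2] at h
  exact h.unique (hasSum_ite_eq t _)

lemma W_star_coord (z : Circle) (f : UqH) (t : Idx) :
    ((star (W z)) f) t = (starRingEnd ℂ) ((z:ℂ) ^ t.2.2) * f t := by
  rw [coord_eq_inner, ContinuousLinearMap.star_eq_adjoint, ContinuousLinearMap.adjoint_inner_right,
    W_bas W hW, inner_smul_left, ← coord_eq_inner]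

lemma W_star_e000 (z : Circle) : (star (W z)) (e 0 0 0) = e 0 0 0 := by
  apply lp.ext
  funext t
  rw [W_star_coord W hW]
  have : e 0 0 0 = bas ((0,0,0) : Idx) := rfl
  rw [this, bas_apply]
  split_ifs with h
  · subst h; simp
  · simp

lemma W_norm (z : Circle) (f : UqH) : ‖W z f‖ = ‖f‖ := by
  have h2 : (0:ℝ) < (2 : ℝ≥0∞).toReal := by norm_num
  have ha := lp.norm_rpow_eq_tsum h2 (W z f)
  have hb := lp.norm_rpow_eq_tsum h2 f
  have : ∀ t : Idx, ‖(W z f) t‖ ^ (2 : ℝ≥0∞).toReal = ‖f t‖ ^ (2 : ℝ≥0∞).toReal := by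
    intro t
    rw [W_coord W hW, norm_mul]
    have : ‖(z:ℂ) ^ t.2.2‖ = 1 := by
      rw [norm_zpow, Circle.norm_coe, one_zpow]
    rw [this, one_mul]
  rw [funext this, ← hb] at ha
  exact Real.rpow_left_injOn (ne_of_gt h2) (Set.mem_setOf.2 (norm_nonneg _))
    (Set.mem_setOf.2 (norm_nonneg _)) ha

lemma W_continuous (f : UqH) : Continuous fun z : Circle => W z f := by
  have key : TendstoUniformly (fun (F : Finset Idx) (z : Circle) => W z (∑ t ∈ F, f t • bas t))
      (fun z => W z f) Filter.atTop := by
    rw [Metric.tendstoUniformly_iff]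
    intro ε hε
    have h : Filter.Tendsto (fun F : Finset Idx => ∑ t ∈ F, f t • bas t)
        Filter.atTop (nhds f) := expand f
    filter_upwards [Metric.tendsto_nhds.mp h ε hε] with F hF z
    rw [dist_eq_norm, ← map_sub, W_norm W hW, ← dist_eq_norm, dist_comm]
    exact hF
  apply key.continuous
  apply Filter.Eventually.frequently
  filter_upwards with F
  have hfz : (fun z : Circle => W z (∑ t ∈ F, f t • bas t))
      = fun z : Circle => ∑ t ∈ F, (f t * (z:ℂ)^t.2.2) • bas t := by
    funext z
    rw [map_sum]
    refine Finset.sum_congr rfl fun t _ => ?_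
    rw [(W z).map_smul, W_bas W hW, smul_smul]
  rw [hfz]
  exact continuous_finset_sum _
    (fun t _ => (continuous_const.mul (circle_cont_zpow t.2.2)).smul continuous_const)

lemma W_integrable (μ : Measure Circle) [IsProbabilityMeasure μ] (f : UqH) :
    Integrable (fun z : Circle => W z f) μ := by
  refine ⟨(W_continuous W hW f).aestronglyMeasurable, ?_⟩
  apply HasFiniteIntegral.of_bounded (C := ‖f‖)
  filter_upwards with z
  rw [W_norm W hW]

end W

section Eta
variable (W : Circle → (UqH →L[ℂ] UqH))
  (hW : ∀ (z : Circle) (i : ℕ) (j k : ℤ), W z (e i j k) = ((z : ℂ) ^ k) • e i j k)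
  (μ : Measure Circle) (hμ : μ.IsHaarMeasure) (hμ1 : IsProbabilityMeasure μ)
  (Eφ : (UqH →L[ℂ] UqH) → (UqH →L[ℂ] UqH))
  (hEφ : ∀ (x : UqH →L[ℂ] UqH) (ξ : UqH),
      Eφ x ξ = ∫ z : Circle, W z (x ((star (W z)) ξ)) ∂μ)

include hW hEφ

lemma Eta_eq (y : UqH →L[ℂ] UqH) :
    Eφ y (e 0 0 0) = ∫ z : Circle, W z (y (e 0 0 0)) ∂μ := by
  rw [hEφ]
  congr 1
  funext z
  rw [W_star_e000 W hW]

include hμ1 in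
lemma Eta_coord (y : UqH →L[ℂ] UqH) (t : Idx) :
    (Eφ y (e 0 0 0)) t = (∫ z : Circle, (z:ℂ)^t.2.2 ∂μ) * (y (e 0 0 0)) t := by
  rw [Eta_eq W hW μ Eφ hEφ y]
  set ζ := y (e 0 0 0) with hζ
  have hint : Integrable (fun z : Circle => W z ζ) μ := W_integrable W hW μ ζ
  rw [coord_eq_inner]
  have hcomm := ((innerSL ℂ (bas t)).integral_comp_comm hint).symm
  simp only [innerSL_apply_apply] at hcomm
  rw [hcomm]
  have hval : ∀ z : Circle, ⟪bas t, W z ζ⟫_ℂ = (z:ℂ)^t.2.2 * ζ t := by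
    intro z
    rw [← coord_eq_inner, W_coord W hW]
  rw [funext hval, integral_mul_const]

include hμ1 in
lemma Eta_norm (y : UqH →L[ℂ] UqH) : ‖Eφ y (e 0 0 0)‖ ≤ ‖y (e 0 0 0)‖ := by
  rw [Eta_eq W hW μ Eφ hEφ y]
  calc ‖∫ z : Circle, W z (y (e 0 0 0)) ∂μ‖ ≤ ∫ z : Circle, ‖W z (y (e 0 0 0))‖ ∂μ :=
        norm_integral_le_integral_norm _
    _ = ∫ _z : Circle, ‖y (e 0 0 0)‖ ∂μ := by
        congr 1; funext z; rw [W_norm W hW]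
    _ = ‖y (e 0 0 0)‖ := by simp

end Eta

section Deg
open scoped Pointwise

def HasDeg (T : UqH →L[ℂ] UqH) (F : Finset ℤ) : Prop :=
  ∀ s t : Idx, (T (bas t)) s ≠ 0 → s.2.2 - t.2.2 ∈ F

lemma hasDeg_shift (T : UqH →L[ℂ] UqH) (σ : Idx → Idx) (c : Idx → ℂ) (d : ℤ)
    (h : ∀ t, T (bas t) = c t • bas (σ t)) (hσ : ∀ t, (σ t).2.2 = t.2.2 + d) :
    HasDeg T {d} := by
  intro s t hne
  rw [h, lp.coeFn_smul, Pi.smul_apply, bas_apply] at hne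
  by_cases hs : s = σ t
  · subst hs; rw [hσ]; simp
  · simp [if_neg hs] at hne

lemma hasDeg_smul (T : UqH →L[ℂ] UqH) (c : ℂ) (F : Finset ℤ) (h : HasDeg T F) :
    HasDeg (c • T) F := by
  intro s t hne
  apply h s t
  intro h0
  apply hne
  rw [ContinuousLinearMap.smul_apply, lp.coeFn_smul, Pi.smul_apply, h0, smul_zero]

lemma hasDeg_one : HasDeg 1 {0} := by
  apply hasDeg_shift 1 id (fun _ => 1) 0 (fun t => by simp) (fun t => by simp)

lemma hasDeg_algebraMap (c : ℂ) : HasDeg (algebraMap ℂ (UqH →L[ℂ] UqH) c) {0} := by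
  rw [Algebra.algebraMap_eq_smul_one]
  exact hasDeg_smul 1 c _ hasDeg_one

lemma hasDeg_add (T T' : UqH →L[ℂ] UqH) (F F' : Finset ℤ)
    (h : HasDeg T F) (h' : HasDeg T' F') : HasDeg (T + T') (F ∪ F') := by
  intro s t hne
  rw [ContinuousLinearMap.add_apply, lp.coeFn_add, Pi.add_apply] at hne
  rcases (by
    by_contra hc
    push_neg at hc
    rw [hc.1, hc.2, add_zero] at hne
    exact hne rfl : (T (bas t)) s ≠ 0 ∨ (T' (bas t)) s ≠ 0) with hx | hx
  · exact Finset.mem_union_left _ (h s t hx)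
  · exact Finset.mem_union_right _ (h' s t hx)

lemma hasDeg_mul (T T' : UqH →L[ℂ] UqH) (F F' : Finset ℤ)
    (h : HasDeg T F) (h' : HasDeg T' F') : HasDeg (T * T') (F + F') := by
  intro s t hne
  rw [ContinuousLinearMap.mul_apply] at hne
  have hsum := op_coord T (T' (bas t)) s
  have hex : ∃ r : Idx, (T' (bas t)) r ≠ 0 ∧ (T (bas r)) s ≠ 0 := by
    by_contra hc
    push_neg at hc
    have hz : (fun r : Idx => (T' (bas t)) r * (T (bas r)) s) = fun _ => 0 := by
      funext r
      by_cases h0 : (T' (bas t)) r = 0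
      · rw [h0, zero_mul]
      · rw [hc r h0, mul_zero]
    rw [hz] at hsum
    exact hne (hsum.unique hasSum_zero)
  obtain ⟨r, hr1, hr2⟩ := hex
  have : s.2.2 - t.2.2 = (s.2.2 - r.2.2) + (r.2.2 - t.2.2) := by ring
  rw [this]
  exact Finset.add_mem_add (h s r hr2) (h' r t hr1)

lemma hasDeg_star (T : UqH →L[ℂ] UqH) (F : Finset ℤ)
    (h : HasDeg T F) : HasDeg (star T) (-F) := by
  intro s t hne
  have hco : ((star T) (bas t)) s = (starRingEnd ℂ) ((T (bas s)) t) := by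
    rw [coord_eq_inner, ContinuousLinearMap.star_eq_adjoint,
      ContinuousLinearMap.adjoint_inner_right, ← inner_conj_symm, ← coord_eq_inner]
  rw [hco] at hne
  have : (T (bas s)) t ≠ 0 := fun h0 => hne (by rw [h0, map_zero])
  have hmem := h t s this
  rw [Finset.mem_neg]
  exact ⟨t.2.2 - s.2.2, hmem, by ring⟩

end Deg

section Adjoin
variable (q : ℂ) (θ : ℝ) (A B D : UqH →L[ℂ] UqH)
    (hA : ∀ (i : ℕ) (j k : ℤ),
      A (e i j k) = ((Real.sqrt (1 - ‖q‖ ^ (2 * (i + 1))) : ℝ) : ℂ) • e (i + 1) j k)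
    (hB : ∀ (i : ℕ) (j k : ℤ), B (e i j k) = (q ^ i) • e i (j + 1) k)
    (hD : ∀ (i : ℕ) (j k : ℤ),
      D (e i j k) = Complex.exp (-(2 * (Real.pi : ℂ) * (θ : ℂ) * (j : ℂ)) * Complex.I) • e i j (k + 1))

include hA hB hD in
lemma adjoin_hasDeg :
    ∀ u ∈ StarAlgebra.adjoin ℂ ({A, B, D} : Set (UqH →L[ℂ] UqH)),
      ∃ F : Finset ℤ, HasDeg u F := by
  intro u hu
  induction hu using StarAlgebra.adjoin_induction with
  | mem x hx =>
    rcases hx with hx | hx | hx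
    · subst hx
      exact ⟨{0}, hasDeg_shift x (fun t => (t.1 + 1, t.2.1, t.2.2))
        (fun t => ((Real.sqrt (1 - ‖q‖ ^ (2 * (t.1 + 1))) : ℝ) : ℂ)) 0
        (fun t => hA t.1 t.2.1 t.2.2) (fun t => by simp)⟩
    · subst hx
      exact ⟨{0}, hasDeg_shift x (fun t => (t.1, t.2.1 + 1, t.2.2))
        (fun t => q ^ t.1) 0 (fun t => hB t.1 t.2.1 t.2.2) (fun t => by simp)⟩
    · rw [Set.mem_singleton_iff] at hx
      subst hx
      exact ⟨{1}, hasDeg_shift x (fun t => (t.1, t.2.1, t.2.2 + 1))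
        (fun t => Complex.exp (-(2 * (Real.pi : ℂ) * (θ : ℂ) * (t.2.1 : ℂ)) * Complex.I)) 1
        (fun t => hD t.1 t.2.1 t.2.2) (fun t => rfl)⟩
  | algebraMap r => exact ⟨{0}, hasDeg_algebraMap r⟩
  | add x y hx hy ihx ihy =>
    obtain ⟨F, hF⟩ := ihx
    obtain ⟨F', hF'⟩ := ihy
    exact ⟨F ∪ F', hasDeg_add x y F F' hF hF'⟩
  | mul x y hx hy ihx ihy =>
    obtain ⟨F, hF⟩ := ihx
    obtain ⟨F', hF'⟩ := ihy
    exact ⟨F + F', hasDeg_mul x y F F' hF hF'⟩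
  | star x hx ihx =>
    obtain ⟨F, hF⟩ := ihx
    exact ⟨-F, hasDeg_star x F hF⟩

include hD in
lemma Dpow_e000 : ∀ m : ℕ, (D ^ m) (e 0 0 0) = e 0 0 (m : ℤ) := by
  intro m
  induction m with
  | zero => simp [e]
  | succ m ih =>
    rw [pow_succ', ContinuousLinearMap.mul_apply, ih, hD]
    have h1 : Complex.exp (-(2 * (Real.pi : ℂ) * (θ : ℂ) * (((0:ℤ) : ℂ))) * Complex.I) = 1 := by
      norm_num
    rw [h1, one_smul]
    norm_num

end Adjoin


set_option maxHeartbeats 2000000 in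
/-- the conditional expectation `E_φ : C(U_q(2)) → C(U_q(2)/_φ 𝕋)` admits no
finite quasi-basis, i.e. it is not of index-finite type (infinite Watatani index). -/
theorem Ephi_no_finite_quasi_basis
    (q : ℂ) (hq0 : 0 < ‖q‖) (hq1 : ‖q‖ < 1)
    (θ : ℝ) (hθ : θ = Complex.arg q / Real.pi)
    (A B D : UqH →L[ℂ] UqH)
    (hA : ∀ (i : ℕ) (j k : ℤ),
      A (e i j k) = ((Real.sqrt (1 - ‖q‖ ^ (2 * (i + 1))) : ℝ) : ℂ) • e (i + 1) j k)
    (hB : ∀ (i : ℕ) (j k : ℤ), B (e i j k) = (q ^ i) • e i (j + 1) k)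
    (hD : ∀ (i : ℕ) (j k : ℤ),
      D (e i j k) = Complex.exp (-(2 * (Real.pi : ℂ) * (θ : ℂ) * (j : ℂ)) * Complex.I) • e i j (k + 1))
    (𝒜 : StarSubalgebra ℂ (UqH →L[ℂ] UqH))
    (h𝒜 : 𝒜 = (StarAlgebra.adjoin ℂ ({A, B, D} : Set (UqH →L[ℂ] UqH))).topologicalClosure)
    -- `W z` is the diagonal unitary `e_{i,j,k} ↦ z^k e_{i,j,k}`
    (W : Circle → (UqH →L[ℂ] UqH))
    (hW : ∀ (z : Circle) (i : ℕ) (j k : ℤ), W z (e i j k) = ((z : ℂ) ^ k) • e i j k)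
    -- `μ` is the normalized Haar (arc-length) probability measure on the circle
    (μ : Measure Circle) (hμ : μ.IsHaarMeasure) (hμ1 : IsProbabilityMeasure μ)
    -- `E_φ` is the averaging `x ↦ ∫ W z x W z* dμ(z)` (Bochner integral pointwise)
    (Eφ : (UqH →L[ℂ] UqH) → (UqH →L[ℂ] UqH))
    (hEφ : ∀ (x : UqH →L[ℂ] UqH) (ξ : UqH),
      Eφ x ξ = ∫ z : Circle, W z (x ((star (W z)) ξ)) ∂μ) :
    ¬ ∃ (n : ℕ) (u v : Fin n → (UqH →L[ℂ] UqH)),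
        (∀ i, u i ∈ 𝒜) ∧ (∀ i, v i ∈ 𝒜) ∧
        ∀ x ∈ 𝒜, (x = ∑ i, u i * Eφ (v i * x)) ∧ (x = ∑ i, Eφ (x * u i) * v i) := by

  rintro ⟨n, u, v, hu, hv, hquasi⟩
  classical
  set 𝒜₀ := StarAlgebra.adjoin ℂ ({A, B, D} : Set (UqH →L[ℂ] UqH)) with h𝒜₀
  set V : ℝ := ∑ i, ‖v i‖ with hV
  have hVnn : (0:ℝ) ≤ V := Finset.sum_nonneg fun i _ => norm_nonneg _
  set ε : ℝ := (2 * (V + 1))⁻¹ with hε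
  have hεpos : 0 < ε := by positivity
  have happrox : ∀ i : Fin n, ∃ u', u' ∈ 𝒜₀ ∧ ‖u i - u'‖ < ε := by
    intro i
    have h1 : u i ∈ closure (𝒜₀ : Set (UqH →L[ℂ] UqH)) := by
      have h2 := hu i; rw [h𝒜] at h2; exact h2
    rw [Metric.mem_closure_iff] at h1
    obtain ⟨y, hy, hdy⟩ := h1 ε hεpos
    exact ⟨y, hy, by rwa [dist_eq_norm] at hdy⟩
  choose u' hu'mem hu'close using happrox
  have hdeg : ∀ i : Fin n, ∃ F : Finset ℤ, HasDeg (star (u' i)) F := by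
    intro i
    obtain ⟨F, hFh⟩ := adjoin_hasDeg q θ A B D hA hB hD (u' i) (hu'mem i)
    exact ⟨-F, hasDeg_star _ F hFh⟩
  choose F hF using hdeg
  set m : ℕ := (Finset.univ.sup fun i : Fin n => (F i).sup fun x : ℤ => (-x).toNat) + 1 with hm
  have hmnot : ∀ i : Fin n, (-(m:ℤ)) ∉ F i := by
    intro i hmem
    have h1 : ((fun x : ℤ => (-x).toNat) (-(m:ℤ))) ≤ (F i).sup (fun x : ℤ => (-x).toNat) :=
      Finset.le_sup (f := fun x : ℤ => (-x).toNat) hmem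
    have h2 : (F i).sup (fun x : ℤ => (-x).toNat)
        ≤ Finset.univ.sup fun i : Fin n => (F i).sup fun x : ℤ => (-x).toNat :=
      Finset.le_sup (f := fun i : Fin n => (F i).sup fun x : ℤ => (-x).toNat) (Finset.mem_univ i)
    simp only [neg_neg, Int.toNat_natCast] at h1
    omega
  have hxmem : D ^ m ∈ 𝒜 := by
    rw [h𝒜]
    exact pow_mem ((StarSubalgebra.le_topologicalClosure _)
      (StarAlgebra.subset_adjoin ℂ _ (by simp))) m
  have hDm : (D ^ m) (e 0 0 0) = e 0 0 (m:ℤ) := Dpow_e000 θ D hD m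
  set t0 : Idx := (0, 0, (m:ℤ)) with ht0
  have heq := congrArg (fun T : UqH →L[ℂ] UqH => ⟪bas t0, T (e 0 0 0)⟫_ℂ) ((hquasi (D ^ m) hxmem).1)
  have hLHS : ⟪bas t0, (D ^ m) (e 0 0 0)⟫_ℂ = 1 := by
    rw [hDm, ← coord_eq_inner]
    have h3 : e 0 0 (m:ℤ) = bas t0 := rfl
    rw [h3, bas_apply, if_pos rfl]
  rw [hLHS, ContinuousLinearMap.sum_apply, inner_sum] at heq
  have hterm : ∀ i : Fin n,
      ‖⟪bas t0, (u i * Eφ (v i * D ^ m)) (e 0 0 0)⟫_ℂ‖ ≤ ε * ‖v i‖ := by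
    intro i
    set η : UqH := Eφ (v i * D ^ m) (e 0 0 0) with hη
    have hηnorm : ‖η‖ ≤ ‖v i‖ :=
      calc ‖η‖ ≤ ‖(v i * D ^ m) (e 0 0 0)‖ := Eta_norm W hW μ hμ1 Eφ hEφ (v i * D ^ m)
        _ = ‖(v i) (e 0 0 (m:ℤ))‖ := by rw [ContinuousLinearMap.mul_apply, hDm]
        _ ≤ ‖v i‖ * ‖e 0 0 (m:ℤ)‖ := (v i).le_opNorm _
        _ = ‖v i‖ := by
            rw [show e 0 0 (m:ℤ) = bas ((0,0,(m:ℤ)) : Idx) from rfl, norm_bas, mul_one]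
    have hsplit : ⟪bas t0, (u i * Eφ (v i * D ^ m)) (e 0 0 0)⟫_ℂ
        = ⟪(star (u i - u' i)) (bas t0), η⟫_ℂ + ⟪(star (u' i)) (bas t0), η⟫_ℂ := by
      rw [ContinuousLinearMap.mul_apply, ← hη]
      have h4 : ⟪bas t0, (u i) η⟫_ℂ = ⟪(star (u i)) (bas t0), η⟫_ℂ := by
        rw [ContinuousLinearMap.star_eq_adjoint, ContinuousLinearMap.adjoint_inner_left]
      rw [h4, show star (u i) = star (u i - u' i) + star (u' i) by
        rw [← star_add, sub_add_cancel], ContinuousLinearMap.add_apply, inner_add_left]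
    have hzero : ⟪(star (u' i)) (bas t0), η⟫_ℂ = 0 := by
      rw [lp.inner_eq_tsum]
      have hz : (fun tt : Idx => ⟪((star (u' i)) (bas t0)) tt, η tt⟫_ℂ) = fun _ => 0 := by
        funext tt
        by_cases hk : tt.2.2 = 0
        · have h5 : ((star (u' i)) (bas t0)) tt = 0 := by
            by_contra hc
            have hmem := hF i tt t0 hc
            rw [hk] at hmem
            have : (0 : ℤ) - t0.2.2 = -(m:ℤ) := by simp [ht0]
            rw [this] at hmem
            exact hmnot i hmem
          rw [h5, inner_zero_left]
        · have h6 : η tt = 0 := by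
            rw [hη, Eta_coord W hW μ hμ1 Eφ hEφ, circint μ hμ hμ1 tt.2.2 hk, zero_mul]
          rw [h6, inner_zero_right]
      rw [hz, tsum_zero]
    rw [hsplit, hzero, add_zero]
    calc ‖⟪(star (u i - u' i)) (bas t0), η⟫_ℂ‖
        ≤ ‖(star (u i - u' i)) (bas t0)‖ * ‖η‖ := by
          exact norm_inner_le_norm _ _
      _ ≤ (‖star (u i - u' i)‖ * ‖bas t0‖) * ‖η‖ := by
          apply mul_le_mul_of_nonneg_right ((star (u i - u' i)).le_opNorm _) (norm_nonneg _)
      _ = ‖u i - u' i‖ * ‖η‖ := by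
          rw [norm_bas, mul_one]
          congr 1
          exact norm_star (u i - u' i)
      _ ≤ ε * ‖v i‖ :=
          mul_le_mul (le_of_lt (hu'close i)) hηnorm (norm_nonneg _) (le_of_lt hεpos)
  have habs : (1:ℝ) ≤ ε * V := by
    calc (1:ℝ) = ‖∑ i, ⟪bas t0, (u i * Eφ (v i * D ^ m)) (e 0 0 0)⟫_ℂ‖ := by
          rw [← heq]; simp
      _ ≤ ∑ i, ‖⟪bas t0, (u i * Eφ (v i * D ^ m)) (e 0 0 0)⟫_ℂ‖ :=
          norm_sum_le _ _
      _ ≤ ∑ i, ε * ‖v i‖ := Finset.sum_le_sum fun i _ => hterm i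
      _ = ε * V := by rw [hV, Finset.mul_sum]
  have h2V : (0:ℝ) < 2 * (V + 1) := by positivity
  have hεV : ε * V < 1 := by
    have h7 : ε * V < ε * (2 * (V + 1)) := by
      apply mul_lt_mul_of_pos_left _ hεpos
      linarith
    have h8 : ε * (2 * (V + 1)) = 1 := inv_mul_cancel₀ (ne_of_gt h2V)
    linarith
  linarith
end
end

section
/- The conditional expectation E_ψ admits no finite quasi-basis on 𝒜: there do not exist n ∈ ℕ and elements u₁, …, uₙ, v₁, …, vₙ ∈ 𝒜 such that x = Σᵢ uᵢ·E_ψ(vᵢ·x) and x = Σᵢ E_ψ(x·uᵢ)·vᵢ for all x ∈ 𝒜. Consequently, E_ψ is not of index-finite type, i.e., it has infinite Watatani index. -/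
open scoped InnerProductSpace
open MeasureTheory
noncomputable section

/-! ### Auxiliary lemmas -/

lemma e_def' (p : ℕ × ℤ × ℤ) : e p.1 p.2.1 p.2.2 = lp.single 2 p 1 := rfl

lemma edense : Dense ((Submodule.span ℂ
    (Set.range fun p : ℕ × ℤ × ℤ => e p.1 p.2.1 p.2.2) : Submodule ℂ UqH) : Set UqH) := by
  intro ξ
  have hs : HasSum (fun p : ℕ × ℤ × ℤ => lp.single 2 p (ξ p)) ξ :=
    lp.hasSum_single (by norm_num) ξ
  refine mem_closure_of_tendsto hs (Filter.Eventually.of_forall fun s => ?_)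
  refine Submodule.sum_mem _ fun p _ => ?_
  have h1 : lp.single 2 p (ξ p) = (ξ p) • e p.1 p.2.1 p.2.2 := by
    rw [e_def', ← lp.single_smul, smul_eq_mul, mul_one]
  rw [h1]
  exact Submodule.smul_mem _ _ (Submodule.subset_span ⟨p, rfl⟩)

lemma clm_ext_e {M : Type*} [NormedAddCommGroup M] [NormedSpace ℂ M]
    {T S : UqH →L[ℂ] M} (h : ∀ i j k, T (e i j k) = S (e i j k)) : T = S := by
  refine ContinuousLinearMap.ext_on edense ?_
  rintro _ ⟨p, rfl⟩
  exact h p.1 p.2.1 p.2.2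

lemma inner_e (p : ℕ × ℤ × ℤ) (η : UqH) : ⟪e p.1 p.2.1 p.2.2, η⟫_ℂ = η p := by
  rw [e_def', lp.inner_single_left]
  simp [RCLike.inner_apply]

section Wfacts
variable {W : Circle → (UqH →L[ℂ] UqH)}
variable (hW : ∀ (z : Circle) (i : ℕ) (j k : ℤ), W z (e i j k) = ((z : ℂ) ^ (i : ℕ)) • e i j k)
include hW

lemma Wcoord (z : Circle) (ξ : UqH) (p : ℕ × ℤ × ℤ) :
    (W z ξ) p = (z : ℂ) ^ p.1 * ξ p := by
  have key : (innerSL ℂ (e p.1 p.2.1 p.2.2)).comp (W z)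
      = ((z : ℂ) ^ p.1) • innerSL ℂ (e p.1 p.2.1 p.2.2) := by
    apply clm_ext_e
    intro i j k
    simp only [ContinuousLinearMap.comp_apply, ContinuousLinearMap.smul_apply, innerSL_apply_apply]
    rw [hW, inner_smul_right]
    have h1 := inner_e p (e i j k)
    by_cases hp : p = (i, j, k)
    · subst hp; rfl
    · have h2 : (⟪e p.1 p.2.1 p.2.2, e i j k⟫_ℂ) = 0 := by
        rw [inner_e]
        exact lp.single_apply_ne 2 _ _ hp
      rw [h2]
      simp
  have := congrArg (fun T : UqH →L[ℂ] ℂ => T ξ) key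
  simp only [ContinuousLinearMap.comp_apply, ContinuousLinearMap.smul_apply, innerSL_apply_apply] at this
  rw [inner_e, inner_e] at this
  simpa [smul_eq_mul] using this

lemma Wmul (z z' : Circle) : W z * W z' = W (z * z') := by
  apply clm_ext_e
  intro i j k
  rw [ContinuousLinearMap.mul_apply, hW, ContinuousLinearMap.map_smul, hW, hW, smul_smul,
    Circle.coe_mul, mul_pow, mul_comm]

lemma Wone : W 1 = 1 := by
  apply clm_ext_e
  intro i j k
  rw [hW]
  simp

lemma Winv (z : Circle) : W z * W z⁻¹ = 1 := by
  rw [Wmul hW, mul_inv_cancel, Wone hW]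

lemma Wnorm (z : Circle) (ξ : UqH) : ‖W z ξ‖ = ‖ξ‖ := by
  have hinner : ⟪W z ξ, W z ξ⟫_ℂ = ⟪ξ, ξ⟫_ℂ := by
    rw [lp.inner_eq_tsum, lp.inner_eq_tsum]
    congr 1
    funext p
    rw [Wcoord hW]
    have hz : (starRingEnd ℂ) (z:ℂ) * (z:ℂ) = 1 := by
      rw [← Circle.coe_inv_eq_conj, ← Circle.coe_mul, inv_mul_cancel, Circle.coe_one]
    simp only [RCLike.inner_apply]
    calc ((z:ℂ) ^ p.1 * ξ p) * (starRingEnd ℂ) ((z:ℂ) ^ p.1 * ξ p)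
        = ((starRingEnd ℂ) (z:ℂ) * (z:ℂ)) ^ p.1 * ((starRingEnd ℂ) (ξ p) * ξ p) := by
          rw [map_mul, map_pow]; ring
      _ = ξ p * (starRingEnd ℂ) (ξ p) := by rw [hz, one_pow, one_mul, mul_comm]
  rw [norm_eq_sqrt_re_inner (𝕜 := ℂ), norm_eq_sqrt_re_inner (𝕜 := ℂ), hinner]

lemma Wstar (z : Circle) : star (W z) = W z⁻¹ := by
  rw [ContinuousLinearMap.star_eq_adjoint]
  symm
  rw [ContinuousLinearMap.eq_adjoint_iff]
  intro x y
  rw [lp.inner_eq_tsum, lp.inner_eq_tsum]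
  congr 1
  funext p
  rw [Wcoord hW, Wcoord hW]
  simp only [RCLike.inner_apply, map_mul, map_pow, Circle.coe_inv_eq_conj,
    RingHomCompTriple.comp_apply, Complex.conj_conj, RingHom.id_apply]
  ring

end Wfacts

/-- homogeneous of degree `d` with respect to the circle action implemented by `W` -/
def Homog (W : Circle → (UqH →L[ℂ] UqH)) (d : ℤ) (x : UqH →L[ℂ] UqH) : Prop :=
  ∀ z : Circle, W z * x = ((z : ℂ) ^ d) • (x * W z)

section HomogFacts
variable {W : Circle → (UqH →L[ℂ] UqH)}

lemma Homog.one : Homog W 0 1 := fun z => by simp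

lemma Homog.mul {d d' : ℤ} {x y : UqH →L[ℂ] UqH} (hx : Homog W d x) (hy : Homog W d' y) :
    Homog W (d + d') (x * y) := fun z => by
  rw [← mul_assoc, hx z, smul_mul_assoc, mul_assoc, hy z, mul_smul_comm, smul_smul,
    ← zpow_add₀ (Circle.coe_ne_zero z), ← mul_assoc]

lemma Homog.star' (hWstar : ∀ z : Circle, star (W z) = W z⁻¹)
    {d : ℤ} {x : UqH →L[ℂ] UqH} (hx : Homog W d x) : Homog W (-d) (star x) := by
  intro z
  have h := congrArg star (hx z⁻¹)
  rw [star_mul, star_smul, star_mul, hWstar, inv_inv] at h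
  have hc : star (((z⁻¹ : Circle) : ℂ) ^ d) = (z : ℂ) ^ d := by
    rw [RCLike.star_def, Circle.coe_inv_eq_conj, ← map_zpow₀, Complex.conj_conj]
  rw [hc] at h
  have hz := Circle.coe_ne_zero z
  calc W z * star x = ((z:ℂ)^(-d) * (z:ℂ)^d) • (W z * star x) := by
        rw [← zpow_add₀ hz, neg_add_cancel, zpow_zero, one_smul]
    _ = (z:ℂ)^(-d) • (star x * W z) := by rw [mul_smul, ← h]

lemma Homog.pow {x : UqH →L[ℂ] UqH} (hx : Homog W 1 x) (m : ℕ) : Homog W (m : ℤ) (x ^ m) := by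
  induction m with
  | zero => simpa using Homog.one
  | succ m ih =>
      have := ih.mul hx
      rw [← pow_succ] at this
      have hcast : ((m:ℤ) + 1) = ((m + 1 : ℕ) : ℤ) := by push_cast; ring
      rwa [hcast] at this

end HomogFacts

/-- integral of a nontrivial character of the circle against Haar measure vanishes -/
lemma int_zpow (μ : Measure Circle) [μ.IsHaarMeasure] {k : ℤ} (hk : k ≠ 0) :
    ∫ z : Circle, (z : ℂ) ^ k ∂μ = 0 := by
  set c : Circle := Circle.exp (Real.pi / k)
  have hc : (c : ℂ) ^ k = -1 := by
    rw [Circle.coe_exp, ← Complex.exp_int_mul, ← Complex.exp_pi_mul_I]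
    congr 1
    have hk' : (k:ℂ) ≠ 0 := by exact_mod_cast hk
    push_cast
    field_simp
  have hinv := integral_mul_left_eq_self (μ := μ) (fun z : Circle => (z : ℂ) ^ k) c
  simp only [Circle.coe_mul, mul_zpow] at hinv
  rw [integral_const_mul, hc] at hinv
  linear_combination (-(2:ℂ)⁻¹) * hinv

section HomogInt
variable {W : Circle → (UqH →L[ℂ] UqH)}

lemma homog_pt (hWstar : ∀ z : Circle, star (W z) = W z⁻¹)
    (hWinv : ∀ z : Circle, W z * W z⁻¹ = 1)
    {d : ℤ} {x : UqH →L[ℂ] UqH} (hx : Homog W d x) (z : Circle) (ξ : UqH) :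
    W z (x ((star (W z)) ξ)) = ((z : ℂ) ^ d) • (x ξ) := by
  have h1 : W z (x ((star (W z)) ξ)) = ((W z * x) * star (W z)) ξ := rfl
  rw [h1, hx z, smul_mul_assoc, ContinuousLinearMap.smul_apply, hWstar, mul_assoc, hWinv,
    mul_one]

lemma cont_zpow (d : ℤ) : Continuous fun z : Circle => ((z : ℂ) ^ d) := by
  apply Continuous.zpow₀ continuous_subtype_val
  intro z; left; exact Circle.coe_ne_zero z

lemma homog_integrable (hWstar : ∀ z : Circle, star (W z) = W z⁻¹)
    (hWinv : ∀ z : Circle, W z * W z⁻¹ = 1)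
    (μ : Measure Circle) [IsProbabilityMeasure μ]
    {d : ℤ} {x : UqH →L[ℂ] UqH} (hx : Homog W d x) (ξ : UqH) :
    Integrable (fun z : Circle => W z (x ((star (W z)) ξ))) μ := by
  have heq : (fun z : Circle => W z (x ((star (W z)) ξ)))
      = fun z : Circle => ((z : ℂ) ^ d) • (x ξ) := by
    funext z; exact homog_pt hWstar hWinv hx z ξ
  rw [heq]
  refine ⟨((cont_zpow d).smul continuous_const).aestronglyMeasurable, ?_⟩
  apply HasFiniteIntegral.of_bounded (C := ‖x ξ‖)
  filter_upwards with z
  rw [norm_smul, norm_zpow]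
  rw [Circle.norm_coe, one_zpow, one_mul]

lemma homog_Epsi_zero (hWstar : ∀ z : Circle, star (W z) = W z⁻¹)
    (hWinv : ∀ z : Circle, W z * W z⁻¹ = 1)
    (μ : Measure Circle) [μ.IsHaarMeasure]
    (Eψ : (UqH →L[ℂ] UqH) → (UqH →L[ℂ] UqH))
    (hEψ : ∀ (x : UqH →L[ℂ] UqH) (ξ : UqH),
      Eψ x ξ = ∫ z : Circle, W z (x ((star (W z)) ξ)) ∂μ)
    {d : ℤ} {x : UqH →L[ℂ] UqH} (hx : Homog W d x) (hd : d ≠ 0) :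
    Eψ x = 0 := by
  ext ξ
  rw [hEψ]
  have heq : (fun z : Circle => W z (x ((star (W z)) ξ)))
      = fun z : Circle => ((z : ℂ) ^ d) • (x ξ) := by
    funext z; exact homog_pt hWstar hWinv hx z ξ
  rw [heq, integral_smul_const, int_zpow μ hd, zero_smul]
  rfl

end HomogInt

/-- the set of homogeneous elements -/
def HSet (W : Circle → (UqH →L[ℂ] UqH)) : Set (UqH →L[ℂ] UqH) := {x | ∃ d, Homog W d x}

section SpanFacts
variable {W : Circle → (UqH →L[ℂ] UqH)}

lemma span_mul_mem {x y : UqH →L[ℂ] UqH}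
    (hx : x ∈ Submodule.span ℂ (HSet W)) (hy : y ∈ Submodule.span ℂ (HSet W)) :
    x * y ∈ Submodule.span ℂ (HSet W) := by
  induction hx using Submodule.span_induction with
  | mem a ha =>
      induction hy using Submodule.span_induction with
      | mem b hb =>
          obtain ⟨d, hd⟩ := ha; obtain ⟨d', hd'⟩ := hb
          exact Submodule.subset_span ⟨d + d', hd.mul hd'⟩
      | zero => rw [mul_zero]; exact Submodule.zero_mem _
      | add b c _ _ hb hc => rw [mul_add]; exact Submodule.add_mem _ hb hc
      | smul c b _ hb => rw [mul_smul_comm]; exact Submodule.smul_mem _ _ hb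
  | zero => rw [zero_mul]; exact Submodule.zero_mem _
  | add a b _ _ ha hb => rw [add_mul]; exact Submodule.add_mem _ ha hb
  | smul c a _ ha => rw [smul_mul_assoc]; exact Submodule.smul_mem _ _ ha

lemma span_star_mem (hWstar : ∀ z : Circle, star (W z) = W z⁻¹) {x : UqH →L[ℂ] UqH}
    (hx : x ∈ Submodule.span ℂ (HSet W)) : star x ∈ Submodule.span ℂ (HSet W) := by
  induction hx using Submodule.span_induction with
  | mem a ha =>
      obtain ⟨d, hd⟩ := ha
      exact Submodule.subset_span ⟨-d, hd.star' hWstar⟩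
  | zero => rw [star_zero]; exact Submodule.zero_mem _
  | add a b _ _ ha hb => rw [star_add]; exact Submodule.add_mem _ ha hb
  | smul c a _ ha => rw [star_smul]; exact Submodule.smul_mem _ _ ha

lemma adjoin_sub_span {A B D : UqH →L[ℂ] UqH}
    (hWstar : ∀ z : Circle, star (W z) = W z⁻¹)
    (hA1 : Homog W 1 A) (hB0 : Homog W 0 B) (hD0 : Homog W 0 D)
    {x : UqH →L[ℂ] UqH} (hx : x ∈ StarAlgebra.adjoin ℂ ({A, B, D} : Set (UqH →L[ℂ] UqH))) :
    x ∈ Submodule.span ℂ (HSet W) := by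
  induction hx using StarAlgebra.adjoin_induction with
  | mem a ha =>
      rcases ha with ha | ha | ha
      · exact Submodule.subset_span ⟨1, ha ▸ hA1⟩
      · exact Submodule.subset_span ⟨0, ha ▸ hB0⟩
      · exact Submodule.subset_span ⟨0, (Set.mem_singleton_iff.mp ha) ▸ hD0⟩
  | algebraMap r =>
      rw [Algebra.algebraMap_eq_smul_one]
      exact Submodule.smul_mem _ _ (Submodule.subset_span ⟨0, Homog.one⟩)
  | add a b _ _ ha hb => exact Submodule.add_mem _ ha hb
  | mul a b _ _ ha hb => exact span_mul_mem ha hb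
  | star a _ ha => exact span_star_mem hWstar ha

lemma spanP (hWstar : ∀ z : Circle, star (W z) = W z⁻¹)
    (hWinv : ∀ z : Circle, W z * W z⁻¹ = 1)
    (μ : Measure Circle) [μ.IsHaarMeasure] [IsProbabilityMeasure μ]
    (Eψ : (UqH →L[ℂ] UqH) → (UqH →L[ℂ] UqH))
    (hEψ : ∀ (x : UqH →L[ℂ] UqH) (ξ : UqH),
      Eψ x ξ = ∫ z : Circle, W z (x ((star (W z)) ξ)) ∂μ)
    {A : UqH →L[ℂ] UqH} (hA1 : Homog W 1 A)
    {v : UqH →L[ℂ] UqH} (hv : v ∈ Submodule.span ℂ (HSet W)) :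
    (∀ (m : ℕ) (ξ : UqH), Integrable (fun z : Circle => W z ((v * A ^ m) ((star (W z)) ξ))) μ) ∧
      ∃ N : ℕ, ∀ m ≥ N, Eψ (v * A ^ m) = 0 := by
  induction hv using Submodule.span_induction with
  | mem a ha =>
      obtain ⟨d, hd⟩ := ha
      refine ⟨fun m ξ => homog_integrable hWstar hWinv μ (hd.mul (hA1.pow m)) ξ,
        (-d).toNat + 1, fun m hm => ?_⟩
      refine homog_Epsi_zero hWstar hWinv μ Eψ hEψ (hd.mul (hA1.pow m)) ?_
      have h1 : (-d : ℤ) ≤ ((-d).toNat : ℤ) := Int.self_le_toNat _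
      have h2 : ((-d).toNat + 1 : ℤ) ≤ (m : ℤ) := by exact_mod_cast hm
      omega
  | zero =>
      constructor
      · intro m ξ
        have h0 : (fun z : Circle => W z (((0 : UqH →L[ℂ] UqH) * A ^ m) ((star (W z)) ξ)))
            = fun _ => (0 : UqH) := by funext z; simp
        rw [h0]
        exact integrable_zero _ _ μ
      · refine ⟨0, fun m _ => ?_⟩
        ext ξ
        rw [hEψ]
        simp
  | add a b ha' hb' ha hb =>
      obtain ⟨haI, N₁, hN₁⟩ := ha
      obtain ⟨hbI, N₂, hN₂⟩ := hb
      have heq : ∀ (m : ℕ) (ξ : UqH), (fun z : Circle => W z (((a + b) * A ^ m) ((star (W z)) ξ)))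
          = fun z : Circle => W z ((a * A ^ m) ((star (W z)) ξ))
              + W z ((b * A ^ m) ((star (W z)) ξ)) := by
        intro m ξ; funext z; rw [add_mul]; simp
      constructor
      · intro m ξ
        rw [heq m ξ]
        exact (haI m ξ).add (hbI m ξ)
      · refine ⟨max N₁ N₂, fun m hm => ?_⟩
        ext ξ
        have : Eψ ((a + b) * A ^ m) ξ = Eψ (a * A ^ m) ξ + Eψ (b * A ^ m) ξ := by
          rw [hEψ, hEψ, hEψ, heq m ξ, integral_add (haI m ξ) (hbI m ξ)]
        rw [this, hN₁ m (le_trans (le_max_left _ _) hm), hN₂ m (le_trans (le_max_right _ _) hm)]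
        simp
  | smul c a ha' ha =>
      obtain ⟨haI, N₁, hN₁⟩ := ha
      have heq : ∀ (m : ℕ) (ξ : UqH), (fun z : Circle => W z (((c • a) * A ^ m) ((star (W z)) ξ)))
          = fun z : Circle => c • W z ((a * A ^ m) ((star (W z)) ξ)) := by
        intro m ξ; funext z; rw [smul_mul_assoc]; simp
      constructor
      · intro m ξ
        rw [heq m ξ]
        exact (haI m ξ).smul c
      · refine ⟨N₁, fun m hm => ?_⟩
        ext ξ
        have : Eψ ((c • a) * A ^ m) ξ = c • Eψ (a * A ^ m) ξ := by
          rw [hEψ, hEψ, heq m ξ, integral_smul]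
        rw [this, hN₁ m hm]
        simp

end SpanFacts

lemma homogA (q : ℂ) {W : Circle → (UqH →L[ℂ] UqH)}
    (hW : ∀ (z : Circle) (i : ℕ) (j k : ℤ), W z (e i j k) = ((z : ℂ) ^ (i : ℕ)) • e i j k)
    (A : UqH →L[ℂ] UqH)
    (hA : ∀ (i : ℕ) (j k : ℤ),
      A (e i j k) = ((Real.sqrt (1 - ‖q‖ ^ (2 * (i + 1))) : ℝ) : ℂ) • e (i + 1) j k) :
    Homog W 1 A := by
  intro z
  apply clm_ext_e
  intro i j k
  rw [ContinuousLinearMap.mul_apply, hA, ContinuousLinearMap.map_smul, hW,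
    ContinuousLinearMap.smul_apply, ContinuousLinearMap.mul_apply, hW,
    ContinuousLinearMap.map_smul, hA, smul_smul, smul_smul, smul_smul, zpow_one, pow_succ]
  congr 1
  ring

lemma homogDeg0 {W : Circle → (UqH →L[ℂ] UqH)}
    (hW : ∀ (z : Circle) (i : ℕ) (j k : ℤ), W z (e i j k) = ((z : ℂ) ^ (i : ℕ)) • e i j k)
    (c : ℕ → ℤ → ℤ → ℂ) (j' k' : ℤ) (B : UqH →L[ℂ] UqH)
    (hB : ∀ (i : ℕ) (j k : ℤ), B (e i j k) = (c i j k) • e i (j + j') (k + k')) :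
    Homog W 0 B := by
  intro z
  apply clm_ext_e
  intro i j k
  rw [ContinuousLinearMap.mul_apply, hB, ContinuousLinearMap.map_smul, hW,
    ContinuousLinearMap.smul_apply, ContinuousLinearMap.mul_apply, hW,
    ContinuousLinearMap.map_smul, hB, smul_smul, smul_smul, smul_smul, zpow_zero]
  congr 1
  ring

lemma Apow_ne (q : ℂ) (hq1 : ‖q‖ < 1) (A : UqH →L[ℂ] UqH)
    (hA : ∀ (i : ℕ) (j k : ℤ),
      A (e i j k) = ((Real.sqrt (1 - ‖q‖ ^ (2 * (i + 1))) : ℝ) : ℂ) • e (i + 1) j k) :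
    ∀ m : ℕ, A ^ m ≠ 0 := by
  have hpow : ∀ m : ℕ, (A ^ m) (e 0 0 0) =
      (∏ t ∈ Finset.range m,
        ((Real.sqrt (1 - ‖q‖ ^ (2 * (t + 1))) : ℝ) : ℂ)) • e m 0 0 := by
    intro m
    induction m with
    | zero => simp
    | succ m ih =>
        rw [pow_succ', ContinuousLinearMap.mul_apply, ih, ContinuousLinearMap.map_smul, hA,
          smul_smul, Finset.prod_range_succ]
  intro m hm
  have h1 := hpow m
  rw [hm] at h1
  have hP : (∏ t ∈ Finset.range m,
      ((Real.sqrt (1 - ‖q‖ ^ (2 * (t + 1))) : ℝ) : ℂ)) ≠ 0 := by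
    rw [Finset.prod_ne_zero_iff]
    intro t _
    rw [Complex.ofReal_ne_zero]
    refine ne_of_gt (Real.sqrt_pos.mpr ?_)
    have : ‖q‖ ^ (2 * (t + 1)) < 1 :=
      pow_lt_one₀ (norm_nonneg _) hq1 (by omega)
    linarith
  have hene : e m 0 0 ≠ 0 := by
    intro h0
    have h2 : (e m 0 0) ((m : ℕ), (0 : ℤ), (0 : ℤ)) = 1 := lp.single_apply_self 2 _ _
    rw [h0] at h2
    simp at h2
  exact smul_ne_zero hP hene (by simpa using h1.symm)
set_option maxHeartbeats 2000000 in
set_option synthInstance.maxHeartbeats 400000 in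
/-- the conditional expectation `E_ψ : C(U_q(2)) → C(U_q(2)/_ψ 𝕋)` admits no
finite quasi-basis, i.e. it is not of index-finite type (infinite Watatani index). -/
theorem Epsi_no_finite_quasi_basis
    (q : ℂ) (hq0 : 0 < ‖q‖) (hq1 : ‖q‖ < 1)
    (θ : ℝ) (hθ : θ = Complex.arg q / Real.pi)
    (A B D : UqH →L[ℂ] UqH)
    (hA : ∀ (i : ℕ) (j k : ℤ),
      A (e i j k) = ((Real.sqrt (1 - ‖q‖ ^ (2 * (i + 1))) : ℝ) : ℂ) • e (i + 1) j k)
    (hB : ∀ (i : ℕ) (j k : ℤ), B (e i j k) = (q ^ i) • e i (j + 1) k)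
    (hD : ∀ (i : ℕ) (j k : ℤ),
      D (e i j k) = Complex.exp (-(2 * (Real.pi : ℂ) * (θ : ℂ) * (j : ℂ)) * Complex.I) • e i j (k + 1))
    (𝒜 : StarSubalgebra ℂ (UqH →L[ℂ] UqH))
    (h𝒜 : 𝒜 = (StarAlgebra.adjoin ℂ ({A, B, D} : Set (UqH →L[ℂ] UqH))).topologicalClosure)
    -- `W z` is the diagonal unitary `e_{i,j,k} ↦ z^i e_{i,j,k}`
    (W : Circle → (UqH →L[ℂ] UqH))
    (hW : ∀ (z : Circle) (i : ℕ) (j k : ℤ), W z (e i j k) = ((z : ℂ) ^ (i : ℕ)) • e i j k)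
    -- `μ` is the normalized Haar (arc-length) probability measure on the circle
    (μ : Measure Circle) (hμ : μ.IsHaarMeasure) (hμ1 : IsProbabilityMeasure μ)
    -- `E_ψ` is the averaging `x ↦ ∫ W z x W z* dμ(z)` (Bochner integral pointwise)
    (Eψ : (UqH →L[ℂ] UqH) → (UqH →L[ℂ] UqH))
    (hEψ : ∀ (x : UqH →L[ℂ] UqH) (ξ : UqH),
      Eψ x ξ = ∫ z : Circle, W z (x ((star (W z)) ξ)) ∂μ) :
    ¬ ∃ (n : ℕ) (u v : Fin n → (UqH →L[ℂ] UqH)),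
        (∀ i, u i ∈ 𝒜) ∧ (∀ i, v i ∈ 𝒜) ∧
        ∀ x ∈ 𝒜, (x = ∑ i, u i * Eψ (v i * x)) ∧ (x = ∑ i, Eψ (x * u i) * v i) := by
  rintro ⟨n, u, v, hu, hv, hquasi⟩
  haveI : μ.IsHaarMeasure := hμ
  -- basic facts about `W`
  have hWst : ∀ z : Circle, star (W z) = W z⁻¹ := fun z => Wstar hW z
  have hWiv : ∀ z : Circle, W z * W z⁻¹ = 1 := fun z => Winv hW z
  have hWn : ∀ (z : Circle) (ξ : UqH), ‖W z ξ‖ = ‖ξ‖ := fun z ξ => Wnorm hW z ξ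
  have hWsn : ∀ (z : Circle) (ξ : UqH), ‖(star (W z)) ξ‖ = ‖ξ‖ := by
    intro z ξ; rw [hWst]; exact hWn _ _
  -- homogeneity of the generators
  have hHA : Homog W 1 A := homogA q hW A hA
  have hHB : Homog W 0 B := homogDeg0 hW (fun i _ _ => q ^ i) 1 0 B (by
    intro i j k; rw [hB]; norm_num)
  have hHD : Homog W 0 D := homogDeg0 hW
    (fun i j k => Complex.exp (-(2 * (Real.pi : ℂ) * (θ : ℂ) * (j : ℂ)) * Complex.I)) 0 1 D (by
    intro i j k; rw [hD]; norm_num)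
  have hAne : ∀ m : ℕ, A ^ m ≠ 0 := Apow_ne q hq1 A hA
  have hspan : ∀ x ∈ StarAlgebra.adjoin ℂ ({A, B, D} : Set (UqH →L[ℂ] UqH)),
      x ∈ Submodule.span ℂ (HSet W) :=
    fun x hx => adjoin_sub_span hWst hHA hHB hHD hx
  have hP : ∀ {x : UqH →L[ℂ] UqH}, x ∈ Submodule.span ℂ (HSet W) →
      (∀ (m : ℕ) (ξ : UqH),
        Integrable (fun z : Circle => W z ((x * A ^ m) ((star (W z)) ξ))) μ) ∧
      ∃ N : ℕ, ∀ m ≥ N, Eψ (x * A ^ m) = 0 :=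
    fun {x} hx => spanP hWst hWiv μ Eψ hEψ hHA hx
  -- constants
  set K : ℝ := ∑ i : Fin n, ‖u i‖ with hK
  have hK0 : 0 ≤ K := Finset.sum_nonneg fun i _ => norm_nonneg _
  set ε : ℝ := (2 * (K + 1))⁻¹ with hε
  have hε0 : 0 < ε := by positivity
  -- each `v i` is in the closure of the star-subalgebra generated by A, B, D
  have hvc : ∀ i, v i ∈
      closure ((StarAlgebra.adjoin ℂ ({A, B, D} : Set (UqH →L[ℂ] UqH)) :
        StarSubalgebra ℂ (UqH →L[ℂ] UqH)) : Set (UqH →L[ℂ] UqH)) := by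
    intro i
    have h1 := hv i
    rw [h𝒜] at h1
    exact h1
  -- integrability of the integrand for `v i * A ^ m`
  have hIv : ∀ (i : Fin n) (m : ℕ) (ξ : UqH),
      Integrable (fun z : Circle => W z ((v i * A ^ m) ((star (W z)) ξ))) μ := by
    intro i m ξ
    obtain ⟨g, hg, hgt⟩ := mem_closure_iff_seq_limit.mp (hvc i)
    have hgn : Filter.Tendsto (fun t => ‖g t - v i‖) Filter.atTop (nhds 0) := by
      rw [← tendsto_iff_norm_sub_tendsto_zero]
      exact hgt
    have hmeas : AEStronglyMeasurable
        (fun z : Circle => W z ((v i * A ^ m) ((star (W z)) ξ))) μ := by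
      apply aestronglyMeasurable_of_tendsto_ae Filter.atTop
        (fun t => ((hP (hspan _ (hg t))).1 m ξ).aestronglyMeasurable)
      filter_upwards with z
      rw [tendsto_iff_norm_sub_tendsto_zero]
      have hb : ∀ t, ‖W z ((g t * A ^ m) ((star (W z)) ξ))
          - W z ((v i * A ^ m) ((star (W z)) ξ))‖ ≤ ‖g t - v i‖ * (‖A ^ m‖ * ‖ξ‖) := by
        intro t
        rw [← map_sub]
        have h1 : (g t * A ^ m) ((star (W z)) ξ) - (v i * A ^ m) ((star (W z)) ξ)
            = ((g t - v i) * A ^ m) ((star (W z)) ξ) := by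
          rw [sub_mul, ContinuousLinearMap.sub_apply]
        rw [h1, hWn]
        calc ‖((g t - v i) * A ^ m) ((star (W z)) ξ)‖
            ≤ ‖(g t - v i) * A ^ m‖ * ‖(star (W z)) ξ‖ := ContinuousLinearMap.le_opNorm _ _
          _ ≤ (‖g t - v i‖ * ‖A ^ m‖) * ‖(star (W z)) ξ‖ := by
              have := norm_mul_le (g t - v i) (A ^ m)
              gcongr
          _ = ‖g t - v i‖ * (‖A ^ m‖ * ‖ξ‖) := by rw [hWsn]; ring
      refine squeeze_zero (fun t => norm_nonneg _) hb ?_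
      simpa using hgn.mul_const (‖A ^ m‖ * ‖ξ‖)
    refine ⟨hmeas, HasFiniteIntegral.of_bounded (C := ‖v i * A ^ m‖ * ‖ξ‖) ?_⟩
    filter_upwards with z
    rw [hWn]
    calc ‖(v i * A ^ m) ((star (W z)) ξ)‖
        ≤ ‖v i * A ^ m‖ * ‖(star (W z)) ξ‖ := ContinuousLinearMap.le_opNorm _ _
      _ = ‖v i * A ^ m‖ * ‖ξ‖ := by rw [hWsn]
  -- choose good approximants
  have hex : ∀ i : Fin n, ∃ p : UqH →L[ℂ] UqH,
      p ∈ Submodule.span ℂ (HSet W) ∧ ‖v i - p‖ ≤ ε ∧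
        ∃ N : ℕ, ∀ m ≥ N, Eψ (p * A ^ m) = 0 := by
    intro i
    obtain ⟨g, hg, hgt⟩ := mem_closure_iff_seq_limit.mp (hvc i)
    obtain ⟨T, hT⟩ := Metric.tendsto_atTop.mp hgt ε hε0
    refine ⟨g T, hspan _ (hg T), ?_, (hP (hspan _ (hg T))).2⟩
    have h1 := hT T le_rfl
    rw [dist_eq_norm] at h1
    rw [norm_sub_rev]
    exact le_of_lt h1
  choose p hpmem hpclose N hN using hex
  -- key estimate
  have hEb : ∀ (i : Fin n) (m : ℕ), N i ≤ m → ‖Eψ (v i * A ^ m)‖ ≤ ε * ‖A ^ m‖ := by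
    intro i m hm
    refine ContinuousLinearMap.opNorm_le_bound _ (by positivity) fun ξ => ?_
    have hz := hN i m hm
    have hsub : Eψ (v i * A ^ m) ξ = ∫ z : Circle,
        (W z ((v i * A ^ m) ((star (W z)) ξ)) - W z ((p i * A ^ m) ((star (W z)) ξ))) ∂μ := by
      rw [integral_sub (hIv i m ξ) ((hP (hpmem i)).1 m ξ), ← hEψ, ← hEψ, hz]
      simp
    rw [hsub]
    have hbd : ∀ z : Circle, ‖W z ((v i * A ^ m) ((star (W z)) ξ))
        - W z ((p i * A ^ m) ((star (W z)) ξ))‖ ≤ (ε * ‖A ^ m‖) * ‖ξ‖ := by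
      intro z
      rw [← map_sub]
      have h1 : (v i * A ^ m) ((star (W z)) ξ) - (p i * A ^ m) ((star (W z)) ξ)
          = ((v i - p i) * A ^ m) ((star (W z)) ξ) := by
        rw [sub_mul, ContinuousLinearMap.sub_apply]
      rw [h1, hWn]
      calc ‖((v i - p i) * A ^ m) ((star (W z)) ξ)‖
          ≤ ‖(v i - p i) * A ^ m‖ * ‖(star (W z)) ξ‖ := ContinuousLinearMap.le_opNorm _ _
        _ ≤ (‖v i - p i‖ * ‖A ^ m‖) * ‖(star (W z)) ξ‖ := by
            have := norm_mul_le (v i - p i) (A ^ m)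
            gcongr
        _ ≤ (ε * ‖A ^ m‖) * ‖ξ‖ := by
            rw [hWsn]
            have := hpclose i
            gcongr
    have hle := norm_integral_le_of_norm_le_const (μ := μ)
      (f := fun z : Circle => W z ((v i * A ^ m) ((star (W z)) ξ))
        - W z ((p i * A ^ m) ((star (W z)) ξ)))
      (C := (ε * ‖A ^ m‖) * ‖ξ‖) (Filter.Eventually.of_forall hbd)
    simpa using hle
  -- the contradiction
  set m : ℕ := Finset.univ.sup N with hm
  have hmN : ∀ i, N i ≤ m := fun i => Finset.le_sup (Finset.mem_univ i)
  have hA𝒜 : A ^ m ∈ 𝒜 := by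
    rw [h𝒜]
    refine pow_mem ?_ m
    exact (StarAlgebra.adjoin ℂ ({A, B, D} : Set (UqH →L[ℂ] UqH))).le_topologicalClosure
      (StarAlgebra.subset_adjoin ℂ _ (by left; rfl))
  have heq := (hquasi (A ^ m) hA𝒜).1
  have hnorm : ‖A ^ m‖ ≤ (K * ε) * ‖A ^ m‖ := by
    calc ‖A ^ m‖ = ‖∑ i, u i * Eψ (v i * A ^ m)‖ := by rw [← heq]
      _ ≤ ∑ i, ‖u i * Eψ (v i * A ^ m)‖ := norm_sum_le _ _
      _ ≤ ∑ i, ‖u i‖ * (ε * ‖A ^ m‖) := by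
          refine Finset.sum_le_sum fun i _ => ?_
          calc ‖u i * Eψ (v i * A ^ m)‖
              ≤ ‖u i‖ * ‖Eψ (v i * A ^ m)‖ := norm_mul_le _ _
            _ ≤ ‖u i‖ * (ε * ‖A ^ m‖) :=
                mul_le_mul_of_nonneg_left (hEb i m (hmN i)) (norm_nonneg _)
      _ = (K * ε) * ‖A ^ m‖ := by rw [← Finset.sum_mul]; ring
  have hKε : K * ε ≤ 1 / 2 := by
    rw [hε, inv_eq_one_div, mul_one_div, div_le_div_iff₀ (by positivity) (by norm_num)]
    linarith
  have hpos : 0 < ‖A ^ m‖ := norm_pos_iff.mpr (hAne m)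
  have hfin : (K * ε) * ‖A ^ m‖ ≤ (1 / 2) * ‖A ^ m‖ :=
    mul_le_mul_of_nonneg_right hKε (norm_nonneg _)
  linarith
end
end

section
/- For every n ∈ ℕ, the operator norm satisfies ‖Σ_{j=0}^{n} B^{j}‖² ≥ (2n² + 4n + 3)/3. (This is the key estimate showing that the conditional expectation E_ψ onto C(U_q(2)/_ψ 𝕋) has infinite Watatani index.) -/
open scoped InnerProductSpace
noncomputable section

/- Auxiliary lemmas -/

lemma inner_e_e (p p' : ℕ × ℤ × ℤ) :
    ⟪(lp.single 2 p (1:ℂ) : UqH), (lp.single 2 p' (1:ℂ) : UqH)⟫_ℂ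
      = if p = p' then 1 else 0 := by
  rw [lp.inner_single_left]
  rw [lp.single_apply]
  by_cases h : p = p'
  · subst h; simp
  · rw [Pi.single_eq_of_ne h, if_neg h]
    simp

lemma gauss2 (m : ℕ) : 2 * ∑ i ∈ Finset.range (m + 1), i = m * (m + 1) := by
  induction m with
  | zero => simp
  | succ m ih =>
    rw [Finset.sum_range_succ, Nat.mul_add, ih]
    ring

set_option maxHeartbeats 1000000 in
lemma key6 (n : ℕ) :
    6 * ∑ j ∈ Finset.range (n + 1), ∑ j' ∈ Finset.range (n + 1),
        ((n + 1) - (j - j') - (j' - j))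
      = 2 * (n + 1) * (2 * n ^ 2 + 4 * n + 3) := by
  induction n with
  | zero => simp
  | succ n ih =>
    have hg : ∀ j ∈ Finset.range (n + 1),
        (∑ j' ∈ Finset.range (n + 2), ((n + 2) - (j - j') - (j' - j)))
          = (∑ j' ∈ Finset.range (n + 1), ((n + 1) - (j - j') - (j' - j))) + (n + 1) + (j + 1) := by
      intro j hj
      simp only [Finset.mem_range] at hj
      rw [Finset.sum_range_succ]
      have h1 : ∀ j' ∈ Finset.range (n + 1),
          (n + 2) - (j - j') - (j' - j) = ((n + 1) - (j - j') - (j' - j)) + 1 := by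
        intro j' hj'
        simp only [Finset.mem_range] at hj'
        omega
      rw [Finset.sum_congr rfl h1, Finset.sum_add_distrib, Finset.sum_const,
        Finset.card_range]
      have h2 : (n + 2) - (j - (n + 1)) - ((n + 1) - j) = j + 1 := by omega
      rw [h2]
      ring
    have hlast : (∑ j' ∈ Finset.range (n + 2), ((n + 2) - ((n + 1) - j') - (j' - (n + 1))))
        = (∑ j' ∈ Finset.range (n + 2), j') + (n + 2) := by
      have h1 : ∀ j' ∈ Finset.range (n + 2),
          (n + 2) - ((n + 1) - j') - (j' - (n + 1)) = j' + 1 := by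
        intro j' hj'
        simp only [Finset.mem_range] at hj'
        omega
      rw [Finset.sum_congr rfl h1, Finset.sum_add_distrib, Finset.sum_const,
        Finset.card_range]
      simp only [smul_eq_mul, mul_one]
    rw [Finset.sum_range_succ, Finset.sum_congr rfl hg, hlast]
    rw [Finset.sum_add_distrib, Finset.sum_add_distrib, Finset.sum_const, Finset.card_range,
      Finset.sum_add_distrib, Finset.sum_const, Finset.card_range]
    have g1 := gauss2 n
    have g2 := gauss2 (n + 1)
    simp only [smul_eq_mul, mul_one]
    linarith [ih, g1, g2]

lemma card_pairs (n j j' : ℕ) :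
    ((Finset.range (n + 1) ×ˢ Finset.range (n + 1)).filter
        (fun p => p.1 + j = p.2 + j')).card
      = (n + 1) - (j - j') - (j' - j) := by
  have hmap : ((Finset.range (n + 1) ×ˢ Finset.range (n + 1)).filter
        (fun p => p.1 + j = p.2 + j'))
      = Finset.map ⟨fun m => (m + (j' - j), m + (j - j')), by
          intro a b h
          simp only [Prod.mk.injEq] at h
          omega⟩ (Finset.range ((n + 1) - (j - j') - (j' - j))) := by
    ext ⟨a, b⟩
    simp only [Finset.mem_filter, Finset.mem_product, Finset.mem_map, Finset.mem_range,
      Function.Embedding.coeFn_mk, Prod.mk.injEq]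
    constructor
    · rintro ⟨⟨ha, hb⟩, hab⟩
      exact ⟨a - (j' - j), by omega, Prod.ext (by show _ + _ = a; omega) (by show _ + _ = b; omega)⟩
    · rintro ⟨m, hm, h1, h2⟩
      refine ⟨⟨by omega, by omega⟩, by omega⟩
  rw [hmap, Finset.card_map, Finset.card_range]

lemma pair_count (n j j' : ℕ) :
    (∑ m ∈ Finset.range (n + 1), ∑ m' ∈ Finset.range (n + 1),
        (if ((m : ℤ) + j = (m' : ℤ) + j') then (1 : ℂ) else 0))
      = (((n + 1) - (j - j') - (j' - j) : ℕ) : ℂ) := by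
  have hcond : ∀ m m' : ℕ, ((m : ℤ) + j = (m' : ℤ) + j') ↔ (m + j = m' + j') := by
    intro m m'; omega
  calc (∑ m ∈ Finset.range (n + 1), ∑ m' ∈ Finset.range (n + 1),
        (if ((m : ℤ) + j = (m' : ℤ) + j') then (1 : ℂ) else 0))
      = ∑ p ∈ Finset.range (n + 1) ×ˢ Finset.range (n + 1),
          (if (p.1 + j = p.2 + j') then (1 : ℂ) else 0) := by
        rw [Finset.sum_product]
        refine Finset.sum_congr rfl fun m _ => Finset.sum_congr rfl fun m' _ => ?_
        simp [hcond m m']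
    _ = (((Finset.range (n + 1) ×ˢ Finset.range (n + 1)).filter
          (fun p => p.1 + j = p.2 + j')).card : ℂ) := by
        rw [Finset.sum_boole]
    _ = (((n + 1) - (j - j') - (j' - j) : ℕ) : ℂ) := by
        rw [card_pairs]

/-- for every `n ∈ ℕ`, `‖∑_{j=0}^{n} B^j‖² ≥ (2n² + 4n + 3)/3`, the key
estimate showing that the conditional expectation `E_ψ` has infinite Watatani index. -/
theorem norm_sq_sum_B_pow_ge
    (q : ℂ) (hq0 : 0 < ‖q‖) (hq1 : ‖q‖ < 1)
    (B : UqH →L[ℂ] UqH)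
    (hB : ∀ (i : ℕ) (j k : ℤ), B (e i j k) = (q ^ i) • e i (j + 1) k) :
    ∀ n : ℕ,
      ((2 * (n : ℝ) ^ 2 + 4 * (n : ℝ) + 3) / 3 : ℝ) ≤ ‖∑ j ∈ Finset.range (n + 1), B ^ j‖ ^ 2 := by
  intro n
  set S : UqH →L[ℂ] UqH := ∑ j ∈ Finset.range (n + 1), B ^ j with hS
  have hBpow : ∀ (j : ℕ) (m : ℤ), (B ^ j) (e 0 m 0) = e 0 (m + j) 0 := by
    intro j
    induction j with
    | zero => intro m; simp
    | succ j ih =>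
      intro m
      rw [pow_succ', ContinuousLinearMap.mul_apply, ih, hB]
      rw [show ((m + (j : ℤ)) + 1 : ℤ) = m + ((j + 1 : ℕ) : ℤ) by push_cast; ring]
      simp
  set v : UqH := ∑ m ∈ Finset.range (n + 1), e 0 (m : ℤ) 0 with hv
  have hSv : S v = ∑ j ∈ Finset.range (n + 1), ∑ m ∈ Finset.range (n + 1),
      e 0 ((m : ℤ) + j) 0 := by
    rw [hS, ContinuousLinearMap.sum_apply]
    refine Finset.sum_congr rfl fun j _ => ?_
    rw [hv, map_sum]
    exact Finset.sum_congr rfl fun m _ => hBpow j m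
  -- ‖v‖² = n + 1
  have hvv : ⟪v, v⟫_ℂ = ((n : ℂ) + 1) := by
    rw [hv, sum_inner]
    have h1 : ∀ m ∈ Finset.range (n + 1),
        ⟪e 0 (m : ℤ) 0, ∑ m' ∈ Finset.range (n + 1), e 0 (m' : ℤ) 0⟫_ℂ = 1 := by
      intro m hm
      rw [inner_sum]
      have h2 : ∀ m' ∈ Finset.range (n + 1),
          ⟪e 0 (m : ℤ) 0, e 0 (m' : ℤ) 0⟫_ℂ = if m = m' then 1 else 0 := by
        intro m' _
        rw [e, e, inner_e_e]
        congr 1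
        simp [Prod.ext_iff]
      rw [Finset.sum_congr rfl h2, Finset.sum_ite_eq, if_pos hm]
    rw [Finset.sum_congr rfl h1, Finset.sum_const, Finset.card_range]
    push_cast
    ring
  have hnv : ‖v‖ ^ 2 = (n : ℝ) + 1 := by
    have h := @inner_self_eq_norm_sq_to_K ℂ UqH _ _ _ v
    rw [hvv] at h
    have h2 : ((‖v‖ ^ 2 : ℝ) : ℂ) = (((n : ℝ) + 1 : ℝ) : ℂ) := by push_cast; exact h.symm
    exact_mod_cast h2
  -- ‖S v‖² = N
  set N : ℕ := ∑ j ∈ Finset.range (n + 1), ∑ j' ∈ Finset.range (n + 1),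
      ((n + 1) - (j - j') - (j' - j)) with hN
  have hSvSv : ⟪S v, S v⟫_ℂ = (N : ℂ) := by
    have expand : ⟪S v, S v⟫_ℂ
        = ∑ j ∈ Finset.range (n + 1), ∑ m ∈ Finset.range (n + 1),
            ∑ j' ∈ Finset.range (n + 1), ∑ m' ∈ Finset.range (n + 1),
              (if ((m : ℤ) + j = (m' : ℤ) + j') then (1 : ℂ) else 0) := by
      rw [hSv]
      simp only [sum_inner, inner_sum]
      refine Finset.sum_congr rfl fun j _ => Finset.sum_congr rfl fun m _ =>
        Finset.sum_congr rfl fun j' _ => Finset.sum_congr rfl fun m' _ => ?_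
      rw [e, e, inner_e_e]
      congr 1
      simp only [Prod.ext_iff, eq_self_iff_true, true_and, and_true, Prod.fst, Prod.snd]
      exact propext ⟨fun h => h.symm, fun h => h.symm⟩
    rw [expand]
    have swap : ∀ j ∈ Finset.range (n + 1),
        (∑ m ∈ Finset.range (n + 1), ∑ j' ∈ Finset.range (n + 1),
            ∑ m' ∈ Finset.range (n + 1),
              (if ((m : ℤ) + j = (m' : ℤ) + j') then (1 : ℂ) else 0))
          = ∑ j' ∈ Finset.range (n + 1), (((n + 1) - (j - j') - (j' - j) : ℕ) : ℂ) := by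
      intro j _
      rw [Finset.sum_comm]
      exact Finset.sum_congr rfl fun j' _ => pair_count n j j'
    rw [Finset.sum_congr rfl swap, hN]
    push_cast
    rfl
  have hnSv : ‖S v‖ ^ 2 = (N : ℝ) := by
    have h := @inner_self_eq_norm_sq_to_K ℂ UqH _ _ _ (S v)
    rw [hSvSv] at h
    have h2 : ((‖S v‖ ^ 2 : ℝ) : ℂ) = (((N : ℝ) : ℝ) : ℂ) := by push_cast; exact h.symm
    exact_mod_cast h2
  -- conclude
  have hle := S.le_opNorm v
  have hsq : ‖S v‖ * ‖S v‖ ≤ (‖S‖ * ‖v‖) * (‖S‖ * ‖v‖) :=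
    mul_le_mul hle hle (norm_nonneg _) (by positivity)
  have h1 : (N : ℝ) ≤ ‖S‖ ^ 2 * ((n : ℝ) + 1) := by nlinarith [hsq, hnSv, hnv]
  have hN6 : 6 * (N : ℝ) = 2 * ((n : ℝ) + 1) * (2 * (n : ℝ) ^ 2 + 4 * (n : ℝ) + 3) := by
    have := key6 n
    rw [← hN] at this
    exact_mod_cast congrArg (fun x : ℕ => (x : ℝ)) this
  rw [div_le_iff₀ (by norm_num : (0 : ℝ) < 3)]
  nlinarith [h1, hN6, Nat.cast_nonneg (α := ℝ) n, sq_nonneg ‖S‖]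
end
end
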